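/- arXiv:1311.1382 — 2 statements merged into one kernel-verified Lean document; each statement's English description precedes it below -/
import Mathlib

section
/- (Long–Zhang periodic version of Gordon's lemma.) Let k ≥ 1 be an integer, T > 0 and a > 0. Let x : ℝ → ℝᵏ be T-periodic, absolutely continuous with derivative ẋ square-integrable on [0,T], and suppose ∫₀^T x(t) dt = 0. Then ∫₀^T ( (1/2)|ẋ(t)|² + a/|x(t)| ) dt ≥ (3/2)·(2π)^{2/3}·a^{2/3}·T^{1/3}, where the integral is an extended-real Lebesgue integral (the term a/|x(t)| is +∞ where x(t) = 0). -/
open MeasureTheory Real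

open Set intervalIntegral
open scoped ENNReal


lemma fubini_step {T : ℝ} (hT : 0 < T) {g : ℝ → ℂ} (hg : IntegrableOn g (Set.Ioc 0 T))
    {e : ℝ → ℂ} (he : Continuous e) :
    ∫ t in (0:ℝ)..T, e t * (∫ s in (0:ℝ)..t, g s) = ∫ s in (0:ℝ)..T, (∫ t in s..T, e t) * g s := by
  set μ0 := volume.restrict (Set.Ioc (0:ℝ) T) with hμ0
  set S : Set (ℝ × ℝ) := {p : ℝ × ℝ | p.2 ≤ p.1} with hS
  have hSm : MeasurableSet S := measurableSet_le measurable_snd measurable_fst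
  have hE : Integrable e μ0 := (he.integrableOn_Ioc)
  have hprod : Integrable (Function.uncurry fun t s => S.indicator (fun p => e p.1 * g p.2) (t, s))
      (μ0.prod μ0) := by
    have : Integrable (fun p : ℝ × ℝ => e p.1 * g p.2) (μ0.prod μ0) := hE.mul_prod hg
    exact this.indicator hSm
  have swap := MeasureTheory.integral_integral_swap hprod
  rw [intervalIntegral.integral_of_le hT.le, intervalIntegral.integral_of_le hT.le]
  calc ∫ t in Set.Ioc 0 T, e t * (∫ s in (0:ℝ)..t, g s)
      = ∫ t, (∫ s, S.indicator (fun p => e p.1 * g p.2) (t, s) ∂μ0) ∂μ0 := by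
        refine setIntegral_congr_fun measurableSet_Ioc (fun t ht => ?_)
        have h1 : ∫ s, S.indicator (fun p => e p.1 * g p.2) (t, s) ∂μ0
            = ∫ s in Set.Ioc 0 T, (Set.Iic t).indicator (fun s => e t * g s) s := by
          refine setIntegral_congr_fun measurableSet_Ioc (fun s _ => ?_)
          by_cases h : s ≤ t <;>
            simp [Set.indicator_apply, hS, h]
        rw [h1, MeasureTheory.setIntegral_indicator measurableSet_Iic]
        have h2 : Set.Ioc 0 T ∩ Set.Iic t = Set.Ioc 0 t := by
          rw [Set.Ioc_inter_Iic, min_eq_right ht.2]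
        rw [h2, intervalIntegral.integral_of_le ht.1.le, ← MeasureTheory.integral_const_mul]
    _ = ∫ s, (∫ t, S.indicator (fun p => e p.1 * g p.2) (t, s) ∂μ0) ∂μ0 := swap
    _ = ∫ s in Set.Ioc 0 T, (∫ t in s..T, e t) * g s := by
        refine setIntegral_congr_fun measurableSet_Ioc (fun s hs => ?_)
        have h1 : ∫ t, S.indicator (fun p => e p.1 * g p.2) (t, s) ∂μ0
            = ∫ t in Set.Ioc 0 T, (Set.Ici s).indicator (fun t => e t * g s) t := by
          refine setIntegral_congr_fun measurableSet_Ioc (fun t _ => ?_)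
          by_cases h : s ≤ t <;> simp [Set.indicator_apply, hS, h]
        rw [h1, MeasureTheory.setIntegral_indicator measurableSet_Ici]
        have h2 : Set.Ioc 0 T ∩ Set.Ici s = Set.Icc s T := by
          ext u; simp only [Set.mem_inter_iff, Set.mem_Ioc, Set.mem_Ici, Set.mem_Icc]
          constructor
          · rintro ⟨⟨_, hu2⟩, hu3⟩; exact ⟨hu3, hu2⟩
          · rintro ⟨hu1, hu2⟩; exact ⟨⟨lt_of_lt_of_le hs.1 hu1, hu2⟩, hu1⟩
        rw [h2, MeasureTheory.integral_Icc_eq_integral_Ioc,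
          ← intervalIntegral.integral_of_le hs.2, intervalIntegral.integral_mul_const]

lemma coeff_rel {T : ℝ} [hT : Fact (0 < T)] {f g : ℝ → ℂ} (hg : IntegrableOn g (Set.Ioc 0 T))
    (hf : ∀ t ∈ Set.Icc (0:ℝ) T, f t = f 0 + ∫ s in (0:ℝ)..t, g s) (hfT : f T = f 0)
    {n : ℤ} (hn : n ≠ 0) :
    ∫ t in (0:ℝ)..T, (fourier (-n) (t : AddCircle T) : ℂ) * f t
      = (T/(2*π*Complex.I*n)) * ∫ t in (0:ℝ)..T, (fourier (-n) (t : AddCircle T) : ℂ) * g t := by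
  have hT0 := hT.out
  set e : ℝ → ℂ := fun t => (fourier (-n) (t : AddCircle T) : ℂ) with he_def
  have he : Continuous e := (map_continuous (fourier (-n))).comp (AddCircle.continuous_mk' T)
  set c : ℂ := (T : ℂ) / (-2 * π * Complex.I * n) with hc
  have hanti : ∀ x : ℝ, HasDerivAt (fun y : ℝ => c * e y) (e x) x := fun x =>
    has_antideriv_at_fourier_neg hT hn x
  have heint : ∀ u v : ℝ, IntervalIntegrable e volume u v := fun u v => he.intervalIntegrable u v
  have hseg : ∀ u v : ℝ, (∫ t in u..v, e t) = c * e v - c * e u := by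
    intro u v
    exact intervalIntegral.integral_eq_sub_of_hasDerivAt (fun x _ => hanti x) (heint u v)
  have heT : e T = 1 := by
    simp only [he_def]
    rw [show ((T:ℝ) : AddCircle T) = 0 from AddCircle.coe_period T]
    simp [fourier_eval_zero]
  have he0 : e 0 = 1 := by
    simp only [he_def]
    norm_cast
    simp [fourier_eval_zero]
  have heint0T : (∫ t in (0:ℝ)..T, e t) = 0 := by rw [hseg, heT, he0, sub_self]
  -- interval integrability of g
  have hgi : IntervalIntegrable g volume 0 T := by
    rw [intervalIntegrable_iff, Set.uIoc_of_le hT0.le]; exact hg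
  -- total integral of g is zero
  have hgT : (∫ s in (0:ℝ)..T, g s) = 0 := by
    have h := hf T ⟨hT0.le, le_refl T⟩
    rw [hfT] at h
    have := h.symm
    rwa [add_eq_left] at this
  -- the primitive
  set F : ℝ → ℂ := fun t => ∫ s in (0:ℝ)..t, g s with hF_def
  have hgIcc : IntegrableOn g (Set.uIcc 0 T) := by
    rw [Set.uIcc_of_le hT0.le, integrableOn_Icc_iff_integrableOn_Ioc]
    exact hg
  have hF : ContinuousOn F (Set.uIcc 0 T) :=
    intervalIntegral.continuousOn_primitive_interval hgIcc
  have hegi : IntervalIntegrable (fun s => e s * g s) volume 0 T :=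
    hgi.continuousOn_mul he.continuousOn
  have key : (∫ t in (0:ℝ)..T, e t * f t)
      = (∫ t in (0:ℝ)..T, e t * f 0) + ∫ t in (0:ℝ)..T, e t * F t := by
    rw [← intervalIntegral.integral_add (f := fun t => e t * f 0) (g := fun t => e t * F t) ((he.mul continuous_const).intervalIntegrable 0 T)
      ((he.continuousOn.mul hF).intervalIntegrable)]
    refine intervalIntegral.integral_congr (fun t ht => ?_)
    rw [Set.uIcc_of_le hT0.le] at ht
    rw [hf t ht]; ring
  have term1 : (∫ t in (0:ℝ)..T, e t * f 0) = 0 := by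
    rw [intervalIntegral.integral_mul_const, heint0T, zero_mul]
  have term2 : (∫ t in (0:ℝ)..T, e t * F t) = -c * ∫ t in (0:ℝ)..T, e t * g t := by
    rw [fubini_step hT0 hg he]
    have : (∫ s in (0:ℝ)..T, (∫ t in s..T, e t) * g s)
        = ∫ s in (0:ℝ)..T, (c * g s - c * (e s * g s)) := by
      refine intervalIntegral.integral_congr (fun s _ => ?_)
      rw [hseg s T, heT, mul_one]; ring
    rw [this, intervalIntegral.integral_sub (hgi.const_mul c) (hegi.const_mul c),
      intervalIntegral.integral_const_mul, intervalIntegral.integral_const_mul, hgT,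
      mul_zero, zero_sub, neg_mul]
  rw [key, term1, term2, zero_add]
  congr 1
  rw [hc]
  rw [show (-2 * (π:ℂ) * Complex.I * n) = -(2 * π * Complex.I * n) by ring, div_neg, neg_neg]

lemma fourierCoeff_liftIoc {T : ℝ} [hT : Fact (0 < T)] (h : ℝ → ℂ) (n : ℤ) :
    fourierCoeff (AddCircle.liftIoc T 0 h) n
      = (1 / T : ℝ) • ∫ t in (0:ℝ)..T, (fourier (-n) (t : AddCircle T) : ℂ) * h t := by
  rw [fourierCoeff_eq_intervalIntegral _ n 0, zero_add]
  congr 1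
  rw [intervalIntegral.integral_of_le hT.out.le, intervalIntegral.integral_of_le hT.out.le]
  refine setIntegral_congr_fun measurableSet_Ioc (fun t ht => ?_)
  rw [AddCircle.liftIoc_coe_apply (by simpa using ht), smul_eq_mul]

lemma parseval_on {T : ℝ} [hT : Fact (0 < T)] {h : ℝ → ℂ}
    (hm : Measurable ((Set.Ioc (0:ℝ) (0+T)).restrict h))
    (h2 : IntegrableOn (fun t => ‖h t‖^2) (Set.Ioc 0 T)) :
    Summable (fun n : ℤ => ‖fourierCoeff (AddCircle.liftIoc T 0 h) n‖^2) ∧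
    ∑' n : ℤ, ‖fourierCoeff (AddCircle.liftIoc T 0 h) n‖^2
      = (1/T) * ∫ t in Set.Ioc (0:ℝ) T, ‖h t‖^2 := by
  have hT0 := hT.out
  set G : AddCircle T → ℂ := AddCircle.liftIoc T 0 h with hG_def
  have hGm : Measurable G :=
    hm.comp (AddCircle.measurableEquivIoc T 0).measurable
  have hcomp : ∀ t ∈ Set.Ioc (0:ℝ) (0 + T), (fun z => ‖G z‖^2) ((t : AddCircle T))
      = ‖h t‖^2 := by
    intro t ht
    simp only [hG_def, AddCircle.liftIoc_coe_apply ht]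
  -- integrability of ‖G‖² wrt volume on AddCircle
  have hGint : Integrable (fun z => ‖G z‖^2) (volume : Measure (AddCircle T)) := by
    rw [← ((AddCircle.measurePreserving_mk T 0).integrable_comp
      (hGm.norm.pow_const 2).aestronglyMeasurable)]
    have : (fun z => ‖G z‖^2) ∘ (fun t : ℝ => (t : AddCircle T))
        =ᵐ[volume.restrict (Set.Ioc 0 (0 + T))] (fun t => ‖h t‖^2) := by
      filter_upwards [ae_restrict_mem measurableSet_Ioc] with t ht
      exact hcomp t ht
    rw [integrable_congr this]
    simpa [IntegrableOn] using h2
  have hvol : (volume : Measure (AddCircle T)) = ENNReal.ofReal T • AddCircle.haarAddCircle :=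
    AddCircle.volume_eq_smul_haarAddCircle
  have hTne : ENNReal.ofReal T ≠ 0 := by
    simp only [ne_eq, ENNReal.ofReal_eq_zero, not_le]
    exact hT0
  have hc : ((ENNReal.ofReal T)⁻¹ • (volume : Measure (AddCircle T)))
      = (AddCircle.haarAddCircle : Measure (AddCircle T)) := by
    rw [hvol, smul_smul, ENNReal.inv_mul_cancel hTne ENNReal.ofReal_ne_top, one_smul]
  have hGhaar : Integrable (fun z => ‖G z‖^2)
      (AddCircle.haarAddCircle : Measure (AddCircle T)) := by
    rw [← hc]
    exact hGint.smul_measure (by simp [hT0])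
  have hG2 : MemLp G 2 (AddCircle.haarAddCircle : Measure (AddCircle T)) :=
    (memLp_two_iff_integrable_sq_norm hGm.aestronglyMeasurable).mpr hGhaar
  set F := hG2.toLp G with hF_def
  have hae : ⇑F =ᵐ[(AddCircle.haarAddCircle : Measure (AddCircle T))] G := hG2.coeFn_toLp
  have hcoeff : ∀ n : ℤ, fourierCoeff (⇑F) n = fourierCoeff G n := by
    intro n
    unfold fourierCoeff
    refine integral_congr_ae ?_
    filter_upwards [hae] with z hz
    rw [hz]
  have hpars := tsum_sq_fourierCoeff F
  have hR : (∫ z : AddCircle T, ‖F z‖^2 ∂(AddCircle.haarAddCircle))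
      = (1/T) * ∫ t in Set.Ioc (0:ℝ) T, ‖h t‖^2 := by
    have h1 : (∫ z : AddCircle T, ‖F z‖^2 ∂(AddCircle.haarAddCircle))
        = ∫ z : AddCircle T, ‖G z‖^2 ∂(AddCircle.haarAddCircle) := by
      refine integral_congr_ae ?_
      filter_upwards [hae] with z hz
      rw [hz]
    have h2 : ∫ z : AddCircle T, ‖G z‖^2
        = T * ∫ z : AddCircle T, ‖G z‖^2 ∂(AddCircle.haarAddCircle) := by
      rw [hvol, MeasureTheory.integral_smul_measure, ENNReal.toReal_ofReal hT0.le, smul_eq_mul]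
    have h3 : ∫ z : AddCircle T, ‖G z‖^2 = ∫ t in Set.Ioc (0:ℝ) T, ‖h t‖^2 := by
      rw [← AddCircle.integral_preimage T 0 (fun z => ‖G z‖^2)]
      simp only [zero_add]
      refine setIntegral_congr_fun measurableSet_Ioc (fun t ht => ?_)
      exact hcomp t (by simpa using ht)
    rw [h1, eq_comm, ← h3, h2]
    field_simp
  have hsum : Summable (fun n : ℤ => ‖fourierCoeff (⇑F) n‖^2) := by
    have hmem := lp.memℓp (fourierBasis.repr F)
    have hs := (memℓp_gen_iff (by norm_num)).mp hmem
    refine hs.congr (fun n => ?_)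
    rw [fourierBasis_repr]
    norm_num
  constructor
  · refine hsum.congr (fun n => ?_)
    rw [hcoeff n]
  · rw [← hR, ← hpars]
    exact tsum_congr (fun n => by rw [hcoeff n])


lemma wirtinger {T : ℝ} [hT : Fact (0 < T)] {f g : ℝ → ℂ}
    (hfm : Measurable ((Set.Ioc (0:ℝ) (0+T)).restrict f))
    (hgm : Measurable ((Set.Ioc (0:ℝ) (0+T)).restrict g))
    (hg : IntegrableOn g (Set.Ioc 0 T)) (hg2 : IntegrableOn (fun t => ‖g t‖^2) (Set.Ioc 0 T))
    (hf : ∀ t ∈ Set.Icc (0:ℝ) T, f t = f 0 + ∫ s in (0:ℝ)..t, g s)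
    (hfT : f T = f 0) (hf2 : IntegrableOn (fun t => ‖f t‖^2) (Set.Ioc 0 T))
    (hmean : ∫ t in (0:ℝ)..T, f t = 0) :
    ∫ t in Set.Ioc (0:ℝ) T, ‖f t‖^2 ≤ (T/(2*π))^2 * ∫ t in Set.Ioc (0:ℝ) T, ‖g t‖^2 := by
  have hT0 := hT.out
  obtain ⟨Sf, Pf⟩ := parseval_on hfm hf2
  obtain ⟨Sg, Pg⟩ := parseval_on hgm hg2
  set cf : ℤ → ℂ := fun n => fourierCoeff (AddCircle.liftIoc T 0 f) n with hcf
  set cg : ℤ → ℂ := fun n => fourierCoeff (AddCircle.liftIoc T 0 g) n with hcg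
  have bound : ∀ n : ℤ, ‖cf n‖^2 ≤ (T/(2*π))^2 * ‖cg n‖^2 := by
    intro n
    rcases eq_or_ne n 0 with rfl | hn
    · have : cf 0 = 0 := by
        rw [hcf]
        simp only [fourierCoeff_liftIoc]
        rw [show ((-0 : ℤ) = 0) from neg_zero]
        have : (∫ t in (0:ℝ)..T, (fourier 0 (t : AddCircle T) : ℂ) * f t)
            = ∫ t in (0:ℝ)..T, f t := by
          refine intervalIntegral.integral_congr (fun t _ => ?_)
          rw [fourier_zero, one_mul]
        rw [this, hmean, smul_zero]
      rw [this, norm_zero]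
      have : (0:ℝ) ≤ (T/(2*π))^2 * ‖cg 0‖^2 := by positivity
      nlinarith [this]
    · have hrel := coeff_rel hg hf hfT hn (T := T)
      have hcfn : cf n = ((T:ℂ)/(2*π*Complex.I*n)) * cg n := by
        rw [hcf, hcg]
        simp only [fourierCoeff_liftIoc]
        rw [hrel, mul_smul_comm]
      have hnorm : ‖cf n‖ = (T/(2*π*|(n:ℝ)|)) * ‖cg n‖ := by
        rw [hcfn, norm_mul]
        congr 1
        rw [norm_div]
        simp only [Complex.norm_real, Real.norm_eq_abs, norm_mul, Complex.norm_I,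
          Complex.norm_intCast, Complex.norm_ofNat, Complex.norm_natCast]
        rw [abs_of_pos hT0, abs_of_pos Real.pi_pos]
        push_cast
        ring_nf
      have hge : (1:ℝ) ≤ |(n:ℝ)| := by
        rw [← Int.cast_abs]
        exact_mod_cast Int.one_le_abs hn
      have hfac : T/(2*π*|(n:ℝ)|) ≤ T/(2*π) := by
        apply div_le_div_of_nonneg_left hT0.le (by positivity)
        nlinarith [Real.pi_pos]
      have h1 : ‖cf n‖ ≤ (T/(2*π)) * ‖cg n‖ := by
        rw [hnorm]
        exact mul_le_mul_of_nonneg_right hfac (norm_nonneg _)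
      calc ‖cf n‖^2 ≤ ((T/(2*π)) * ‖cg n‖)^2 := by
            apply sq_le_sq' _ h1
            nlinarith [norm_nonneg (cf n)]
        _ = (T/(2*π))^2 * ‖cg n‖^2 := by ring
  have hsumle := Summable.tsum_le_tsum bound Sf (Sg.mul_left ((T/(2*π))^2))
  rw [Pf, tsum_mul_left, Pg] at hsumle
  have hT' : (0:ℝ) < 1/T := by positivity
  nlinarith [hsumle]

lemma endgame {T a A B j : ℝ} (hT : 0 < T) (ha : 0 < a) (hA : 0 ≤ A) (hB : 0 ≤ B) (hj : 0 < j)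
    (h1 : T ≤ B ^ ((1:ℝ)/3) * j ^ ((2:ℝ)/3)) (h2 : B ≤ (T/(2*π))^2 * A) :
    (3/2) * (2*π) ^ ((2:ℝ)/3) * a ^ ((2:ℝ)/3) * T ^ ((1:ℝ)/3) ≤ A/2 + a * j := by
  have hpi : (0:ℝ) < 2*π := by positivity
  set c : ℝ := 2*π*a*T^((1:ℝ)/2) with hc_def
  have hc : 0 < c := by positivity
  set s : ℝ := A ^ ((1:ℝ)/2) with hs_def
  set d : ℝ := c ^ ((1:ℝ)/3) with hd_def
  have hA0 : 0 < A := by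
    rcases lt_or_eq_of_le hA with h | h
    · exact h
    · exfalso
      have hB0 : B = 0 := le_antisymm (by rw [← h] at h2; simpa using h2) hB
      rw [hB0] at h1
      rw [Real.zero_rpow (by norm_num), zero_mul] at h1
      linarith
  have hs : 0 < s := Real.rpow_pos_of_pos hA0 _
  have hd : 0 < d := Real.rpow_pos_of_pos hc _
  -- raise h1 to the power 3/2
  have h3 : T ^ ((3:ℝ)/2) ≤ B ^ ((1:ℝ)/2) * j := by
    have := Real.rpow_le_rpow hT.le h1 (by norm_num : (0:ℝ) ≤ (3:ℝ)/2)
    calc T ^ ((3:ℝ)/2) ≤ (B ^ ((1:ℝ)/3) * j ^ ((2:ℝ)/3)) ^ ((3:ℝ)/2) := this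
      _ = B ^ ((1:ℝ)/2) * j := by
          rw [Real.mul_rpow (Real.rpow_nonneg hB _) (Real.rpow_nonneg hj.le _),
            ← Real.rpow_mul hB, ← Real.rpow_mul hj.le]
          norm_num
  -- bound B^{1/2}
  have h4 : B ^ ((1:ℝ)/2) ≤ (T/(2*π)) * s := by
    have := Real.rpow_le_rpow hB h2 (by norm_num : (0:ℝ) ≤ (1:ℝ)/2)
    calc B ^ ((1:ℝ)/2) ≤ ((T/(2*π))^2 * A) ^ ((1:ℝ)/2) := this
      _ = (T/(2*π)) * s := by
          rw [Real.mul_rpow (by positivity) hA, ← Real.rpow_natCast (T/(2*π)) 2,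
            ← Real.rpow_mul (by positivity)]
          norm_num
          exact Or.inl hs_def.symm
  -- hence c/s ≤ a*j
  have h5 : c / s ≤ a * j := by
    rw [div_le_iff₀ hs]
    have h6 : T ^ ((3:ℝ)/2) ≤ (T/(2*π)) * s * j :=
      h3.trans (mul_le_mul_of_nonneg_right h4 hj.le)
    have hT32 : T ^ ((3:ℝ)/2) = T * T ^ ((1:ℝ)/2) := by
      rw [show ((3:ℝ)/2) = 1 + (1:ℝ)/2 by norm_num, Real.rpow_add hT, Real.rpow_one]
    rw [hT32] at h6
    have h7 := mul_le_mul_of_nonneg_left h6 (by positivity : (0:ℝ) ≤ 2*π*a/T)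
    calc c = (2*π*a/T) * (T * T ^ ((1:ℝ)/2)) := by
          field_simp [hc_def]
          ring
      _ ≤ (2*π*a/T) * (T/(2*π) * s * j) := h7
      _ = a * j * s := by field_simp
  -- AM-GM
  have hs2 : s^2 = A := by
    rw [hs_def, ← Real.rpow_natCast (A ^ ((1:ℝ)/2)) 2, ← Real.rpow_mul hA]
    norm_num
  have hd3 : d^3 = c := by
    rw [hd_def, ← Real.rpow_natCast (c ^ ((1:ℝ)/3)) 3, ← Real.rpow_mul hc.le]
    norm_num
  have hamgm : (3/2) * d^2 ≤ A/2 + c/s := by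
    have hkey : 3*d^2*s ≤ s^3 + 2*d^3 := by
      nlinarith [mul_nonneg (sq_nonneg (s-d)) (by positivity : (0:ℝ) ≤ s + 2*d)]
    have h8 : (3/2)*d^2 ≤ (s^3+2*d^3)/(2*s) := by
      rw [le_div_iff₀ (by positivity)]
      nlinarith [hkey]
    have h9 : (s^3+2*d^3)/(2*s) = s^2/2 + d^3/s := by
      field_simp
    have h10 := h8.trans_eq h9
    rw [hs2, hd3] at h10
    exact h10
  -- identify (3/2) d^2 with the constant
  have hid : (3/2) * d^2 = (3/2) * (2*π) ^ ((2:ℝ)/3) * a ^ ((2:ℝ)/3) * T ^ ((1:ℝ)/3) := by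
    have hd2 : d^2 = c ^ ((2:ℝ)/3) := by
      rw [hd_def, ← Real.rpow_natCast (c ^ ((1:ℝ)/3)) 2, ← Real.rpow_mul hc.le]
      norm_num
    rw [hd2, hc_def]
    rw [Real.mul_rpow (by positivity) (Real.rpow_nonneg hT.le _),
      Real.mul_rpow (by positivity) ha.le, ← Real.rpow_mul hT.le]
    norm_num
    ring
  linarith [hamgm, h5, hid]

lemma holder_step {T : ℝ} (hT : 0 < T) {u : ℝ → ℝ}
    (hu : AEMeasurable u (volume.restrict (Set.Ioc 0 T)))
    (hpos : ∀ᵐ t ∂(volume.restrict (Set.Ioc (0:ℝ) T)), 0 < u t) :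
    ENNReal.ofReal T ≤ (∫⁻ t in Set.Ioc (0:ℝ) T, ENNReal.ofReal (u t) ^ (2:ℝ)) ^ ((1:ℝ)/3)
        * (∫⁻ t in Set.Ioc (0:ℝ) T, (ENNReal.ofReal (u t))⁻¹) ^ ((2:ℝ)/3) := by
  set ν := volume.restrict (Set.Ioc (0:ℝ) T) with hν
  set U : ℝ → ℝ≥0∞ := fun t => ENNReal.ofReal (u t) with hU_def
  have hU : AEMeasurable U ν := ENNReal.measurable_ofReal.comp_aemeasurable hu
  have hpq : Real.HolderConjugate 3 (3/2) := Real.holderConjugate_iff.mpr ⟨by norm_num, by norm_num⟩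
  have hf : AEMeasurable (fun t => U t ^ ((2:ℝ)/3)) ν := hU.pow_const _
  have hg : AEMeasurable (fun t => U t ^ (-(2:ℝ)/3)) ν := hU.pow_const _
  have hH := ENNReal.lintegral_mul_le_Lp_mul_Lq ν hpq hf hg
  have hone : (∫⁻ t, ((fun t => U t ^ ((2:ℝ)/3)) * fun t => U t ^ (-(2:ℝ)/3)) t ∂ν)
      = ENNReal.ofReal T := by
    have : (∫⁻ t, ((fun t => U t ^ ((2:ℝ)/3)) * fun t => U t ^ (-(2:ℝ)/3)) t ∂ν)
        = ∫⁻ _t, 1 ∂ν := by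
      refine lintegral_congr_ae ?_
      filter_upwards [hpos] with t ht
      simp only [Pi.mul_apply]
      rw [← ENNReal.rpow_add _ _ (by simp [hU_def, ht.le, ht, ENNReal.ofReal_eq_zero, not_le])
        (by simp [hU_def]), show ((2:ℝ)/3 + -(2:ℝ)/3) = 0 by norm_num, ENNReal.rpow_zero]
    rw [this, lintegral_one, hν, Measure.restrict_apply_univ, Real.volume_Ioc, sub_zero]
  rw [hone] at hH
  have e1 : (fun t => (U t ^ ((2:ℝ)/3)) ^ (3:ℝ)) = fun t => U t ^ (2:ℝ) := by
    funext t
    rw [← ENNReal.rpow_mul]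
    norm_num
  have e2 : (fun t => (U t ^ (-(2:ℝ)/3)) ^ ((3:ℝ)/2)) = fun t => (U t)⁻¹ := by
    funext t
    rw [← ENNReal.rpow_mul]
    norm_num [ENNReal.rpow_neg_one]
  calc ENNReal.ofReal T ≤ (∫⁻ t, (U t ^ ((2:ℝ)/3)) ^ (3:ℝ) ∂ν) ^ ((1:ℝ)/3)
        * (∫⁻ t, (U t ^ (-(2:ℝ)/3)) ^ ((3:ℝ)/2) ∂ν) ^ (1/((3:ℝ)/2)) := hH
    _ = (∫⁻ t, U t ^ (2:ℝ) ∂ν) ^ ((1:ℝ)/3) * (∫⁻ t, (U t)⁻¹ ∂ν) ^ ((2:ℝ)/3) := by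
        rw [e1, e2]
        norm_num

/-- Long–Zhang periodic version of Gordon's lemma: if `x : ℝ → ℝᵏ` is `T`-periodic,
absolutely continuous with square-integrable derivative `x'`, and `∫₀ᵀ x = 0`, then
`∫₀ᵀ (1/2)|x'|² + a/|x| ≥ (3/2) (2π)^{2/3} a^{2/3} T^{1/3}`. -/
theorem stmt7 (k : ℕ) (hk : 1 ≤ k) (T : ℝ) (hT : 0 < T) (a : ℝ) (ha : 0 < a)
    (x x' : ℝ → EuclideanSpace ℝ (Fin k))
    (hper : ∀ t : ℝ, x (t + T) = x t)
    (hAC : ∀ t ∈ Set.Icc (0:ℝ) T, x t = x 0 + ∫ s in (0:ℝ)..t, x' s)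
    (hL1 : IntegrableOn x' (Set.Icc (0:ℝ) T))
    (hL2 : IntegrableOn (fun t => ‖x' t‖ ^ 2) (Set.Icc (0:ℝ) T))
    (hmean : ∫ t in (0:ℝ)..T, x t = 0) :
    ENNReal.ofReal ((3 / 2) * (2 * π) ^ ((2:ℝ)/3) * a ^ ((2:ℝ)/3) * T ^ ((1:ℝ)/3))
      ≤ ∫⁻ t in Set.Icc (0:ℝ) T,
          ENNReal.ofReal ((1 / 2) * ‖x' t‖ ^ 2) + ENNReal.ofReal a / ENNReal.ofReal ‖x t‖ := by
  haveI : Fact (0 < T) := ⟨hT⟩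
  have hsub : Set.Ioc (0:ℝ) T ⊆ Set.Icc 0 T := Set.Ioc_subset_Icc_self
  -- continuity of x on [0, T]
  have hxint : IntegrableOn x' (Set.uIcc 0 T) := by rwa [Set.uIcc_of_le hT.le]
  have hxc : ContinuousOn x (Set.Icc 0 T) := by
    have h := intervalIntegral.continuousOn_primitive_interval hxint
    rw [Set.uIcc_of_le hT.le] at h
    exact (continuousOn_const.add h).congr (fun t ht => hAC t ht)
  -- measurable representative of x'
  obtain ⟨y, hym, hyae⟩ := hL1.aestronglyMeasurable
  have hymm : Measurable y := hym.measurable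
  have hyaeIoc : ∀ᵐ t ∂(volume.restrict (Set.Ioc (0:ℝ) T)), x' t = y t :=
    ae_restrict_of_ae_restrict_of_subset hsub hyae
  have hyL1 : IntegrableOn y (Set.Icc 0 T) := (integrable_congr hyae).mp hL1
  have hyL2 : IntegrableOn (fun t => ‖y t‖^2) (Set.Icc 0 T) := by
    refine (integrable_congr ?_).mp hL2
    filter_upwards [hyae] with t ht
    rw [ht]
  have hyae' := (ae_restrict_iff' measurableSet_Icc).mp hyae
  have hACy : ∀ t ∈ Set.Icc (0:ℝ) T, x t = x 0 + ∫ s in (0:ℝ)..t, y s := by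
    intro t ht
    rw [hAC t ht]
    congr 1
    refine intervalIntegral.integral_congr_ae ?_
    filter_upwards [hyae'] with s hs hmem
    refine hs ?_
    rw [Set.uIoc_of_le ht.1] at hmem
    exact hsub (Set.Ioc_subset_Ioc_right ht.2 hmem)
  have hyint : ∀ t ∈ Set.Icc (0:ℝ) T, IntervalIntegrable y volume 0 t := by
    intro t ht
    rw [intervalIntegrable_iff, Set.uIoc_of_le ht.1]
    exact hyL1.mono_set (fun s hs => ⟨hs.1.le, hs.2.trans ht.2⟩)
  -- norm-squared on EuclideanSpace
  have hnormsq : ∀ (v : EuclideanSpace ℝ (Fin k)), ‖v‖^2 = ∑ i, (v i)^2 := by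
    intro v
    rw [EuclideanSpace.norm_eq, Real.sq_sqrt (Finset.sum_nonneg fun i _ => sq_nonneg _)]
    congr 1; funext i; rw [Real.norm_eq_abs, sq_abs]
  have hcoordx : ∀ j : Fin k, ContinuousOn (fun t => x t j) (Set.Icc 0 T) := by
    intro j
    exact (EuclideanSpace.proj (𝕜 := ℝ) j).continuous.comp_continuousOn hxc
  have hcoordy : ∀ j : Fin k, Measurable (fun t => y t j) := by
    intro j
    exact ((EuclideanSpace.proj (𝕜 := ℝ) j).continuous.measurable).comp hymm
  have hybd : ∀ (j : Fin k) t, (y t j)^2 ≤ ‖y t‖^2 := by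
    intro j t
    rw [hnormsq]
    exact Finset.single_le_sum (f := fun i => (y t i)^2) (fun i _ => sq_nonneg _)
      (Finset.mem_univ j)
  have hxbd : ∀ (j : Fin k) t, (x t j)^2 ≤ ‖x t‖^2 := by
    intro j t
    rw [hnormsq]
    exact Finset.single_le_sum (f := fun i => (x t i)^2) (fun i _ => sq_nonneg _)
      (Finset.mem_univ j)
  have hyjint : ∀ j : Fin k, IntegrableOn (fun t => (y t j)^2) (Set.Icc 0 T) := by
    intro j
    refine Integrable.mono' hyL2 ((hcoordy j).pow_const 2).aestronglyMeasurable ?_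
    refine Filter.Eventually.of_forall (fun t => ?_)
    rw [Real.norm_eq_abs, abs_of_nonneg (sq_nonneg _)]
    exact hybd j t
  have hxjint : ∀ j : Fin k, IntegrableOn (fun t => (x t j)^2) (Set.Icc 0 T) := by
    intro j
    exact ((hcoordx j).pow 2).integrableOn_Icc
  -- coordinatewise Wirtinger
  have key : ∀ j : Fin k, ∫ t in Set.Ioc (0:ℝ) T, (x t j)^2
      ≤ (T/(2*π))^2 * ∫ t in Set.Ioc (0:ℝ) T, (y t j)^2 := by
    intro j
    set f : ℝ → ℂ := fun t => ((x t j : ℝ) : ℂ) with hf_def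
    set g : ℝ → ℂ := fun t => ((y t j : ℝ) : ℂ) with hg_def
    have hfc : ContinuousOn f (Set.Icc 0 T) :=
      Complex.continuous_ofReal.comp_continuousOn (hcoordx j)
    have hfm : Measurable ((Set.Ioc (0:ℝ) (0+T)).restrict f) := by
      have : ContinuousOn f (Set.Ioc (0:ℝ) (0+T)) := by
        rw [zero_add]
        exact hfc.mono hsub
      exact (continuousOn_iff_continuous_restrict.mp this).measurable
    have hgm : Measurable ((Set.Ioc (0:ℝ) (0+T)).restrict g) :=
      (Complex.measurable_ofReal.comp (hcoordy j)).comp measurable_subtype_coe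
    have hg : IntegrableOn g (Set.Ioc 0 T) := by
      have h1 : IntegrableOn (fun t => y t j) (Set.Ioc 0 T) :=
        (EuclideanSpace.proj (𝕜 := ℝ) j).integrable_comp (hyL1.mono_set hsub)
      exact h1.ofReal
    have hg2 : IntegrableOn (fun t => ‖g t‖^2) (Set.Ioc 0 T) := by
      have : (fun t => ‖g t‖^2) = fun t => (y t j)^2 := by
        funext t
        rw [hg_def]
        simp [Complex.norm_real, Real.norm_eq_abs, sq_abs]
      rw [this]
      exact (hyjint j).mono_set hsub
    have hf2 : IntegrableOn (fun t => ‖f t‖^2) (Set.Ioc 0 T) := by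
      have : (fun t => ‖f t‖^2) = fun t => (x t j)^2 := by
        funext t
        rw [hf_def]
        simp [Complex.norm_real, Real.norm_eq_abs, sq_abs]
      rw [this]
      exact (hxjint j).mono_set hsub
    have hfj : ∀ t ∈ Set.Icc (0:ℝ) T, f t = f 0 + ∫ s in (0:ℝ)..t, g s := by
      intro t ht
      have h2 : x t j = x 0 j + ∫ s in (0:ℝ)..t, y s j := by
        have h3 := congrArg (fun v : EuclideanSpace ℝ (Fin k) => v j) (hACy t ht)
        have h4 : (∫ s in (0:ℝ)..t, y s) j = ∫ s in (0:ℝ)..t, y s j := by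
          have h5 := (EuclideanSpace.proj (𝕜 := ℝ) j).intervalIntegral_comp_comm (hyint t ht)
          exact h5.symm
        simpa [h4] using h3
      rw [hf_def]
      simp only []
      rw [show (∫ s in (0:ℝ)..t, g s) = (((∫ s in (0:ℝ)..t, y s j : ℝ)) : ℂ) by
        rw [hg_def, intervalIntegral.integral_ofReal]]
      norm_cast
    have hfT : f T = f 0 := by
      have hxT : x T = x 0 := by have h := hper 0; rwa [zero_add] at h
      show ((x T j : ℝ) : ℂ) = ((x 0 j : ℝ) : ℂ)
      rw [hxT]
    have hmeanj : ∫ t in (0:ℝ)..T, f t = 0 := by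
      have hxii : IntervalIntegrable x volume 0 T := by
        apply ContinuousOn.intervalIntegrable
        rwa [Set.uIcc_of_le hT.le]
      have h5 : (∫ t in (0:ℝ)..T, x t j)
          = EuclideanSpace.proj (𝕜 := ℝ) j (∫ t in (0:ℝ)..T, x t) :=
        (EuclideanSpace.proj (𝕜 := ℝ) j).intervalIntegral_comp_comm hxii
      rw [hmean, map_zero] at h5
      show (∫ t in (0:ℝ)..T, ((x t j : ℝ) : ℂ)) = 0
      rw [intervalIntegral.integral_ofReal, h5, Complex.ofReal_zero]
    have hw := wirtinger hfm hgm hg hg2 hfj hfT hf2 hmeanj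
    have e1 : ∫ t in Set.Ioc (0:ℝ) T, ‖f t‖^2 = ∫ t in Set.Ioc (0:ℝ) T, (x t j)^2 := by
      refine setIntegral_congr_fun measurableSet_Ioc (fun t _ => ?_)
      rw [hf_def]
      simp [Complex.norm_real, Real.norm_eq_abs, sq_abs]
    have e2 : ∫ t in Set.Ioc (0:ℝ) T, ‖g t‖^2 = ∫ t in Set.Ioc (0:ℝ) T, (y t j)^2 := by
      refine setIntegral_congr_fun measurableSet_Ioc (fun t _ => ?_)
      rw [hg_def]
      simp [Complex.norm_real, Real.norm_eq_abs, sq_abs]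
    rw [e1, e2] at hw
    exact hw
  -- summing over coordinates
  set B : ℝ := ∫ t in Set.Ioc (0:ℝ) T, ‖x t‖^2 with hB_def
  set A : ℝ := ∫ t in Set.Ioc (0:ℝ) T, ‖x' t‖^2 with hA_def
  have hA_y : A = ∫ t in Set.Ioc (0:ℝ) T, ‖y t‖^2 := by
    rw [hA_def]
    refine integral_congr_ae ?_
    filter_upwards [hyaeIoc] with t ht
    rw [ht]
  have hBsum : B = ∑ j, ∫ t in Set.Ioc (0:ℝ) T, (x t j)^2 := by
    rw [hB_def, ← integral_finset_sum _ (fun j _ => (hxjint j).mono_set hsub)]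
    refine setIntegral_congr_fun measurableSet_Ioc (fun t _ => ?_)
    exact hnormsq (x t)
  have hAsum : A = ∑ j, ∫ t in Set.Ioc (0:ℝ) T, (y t j)^2 := by
    rw [hA_y, ← integral_finset_sum _ (fun j _ => (hyjint j).mono_set hsub)]
    refine setIntegral_congr_fun measurableSet_Ioc (fun t _ => ?_)
    exact hnormsq (y t)
  have hBA : B ≤ (T/(2*π))^2 * A := by
    rw [hBsum, hAsum, Finset.mul_sum]
    exact Finset.sum_le_sum (fun j _ => key j)
  have hB0 : (0:ℝ) ≤ B := setIntegral_nonneg measurableSet_Ioc (fun t _ => sq_nonneg _)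
  have hA0 : (0:ℝ) ≤ A := setIntegral_nonneg measurableSet_Ioc (fun t _ => sq_nonneg _)
  -- move the goal to Ioc
  rw [show (∫⁻ t in Set.Icc (0:ℝ) T,
        ENNReal.ofReal ((1 / 2) * ‖x' t‖ ^ 2) + ENNReal.ofReal a / ENNReal.ofReal ‖x t‖)
      = ∫⁻ t in Set.Ioc (0:ℝ) T,
        ENNReal.ofReal ((1 / 2) * ‖x' t‖ ^ 2) + ENNReal.ofReal a / ENNReal.ofReal ‖x t‖ from
    (setLIntegral_congr MeasureTheory.Ioc_ae_eq_Icc).symm]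
  have hm1 : AEMeasurable (fun t => ENNReal.ofReal ((1/2) * ‖x' t‖^2))
      (volume.restrict (Set.Ioc (0:ℝ) T)) := by
    have hmy : Measurable (fun t => ENNReal.ofReal ((1/2) * ‖y t‖^2)) :=
      ENNReal.measurable_ofReal.comp ((hymm.norm.pow_const 2).const_mul _)
    refine hmy.aemeasurable.congr ?_
    filter_upwards [hyaeIoc] with t ht
    rw [ht]
  rw [lintegral_add_left' hm1]
  have hp1 : (∫⁻ t in Set.Ioc (0:ℝ) T, ENNReal.ofReal ((1/2) * ‖x' t‖^2))
      = ENNReal.ofReal ((1/2) * A) := by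
    rw [← ofReal_integral_eq_lintegral_ofReal ((hL2.mono_set hsub).const_mul _)
      (Filter.Eventually.of_forall fun t => by positivity)]
    rw [hA_def]
    congr 1
    exact integral_const_mul _ _
  rw [hp1]
  have hu : AEMeasurable (fun t => ‖x t‖) (volume.restrict (Set.Ioc (0:ℝ) T)) :=
    ((hxc.mono hsub).norm).aemeasurable measurableSet_Ioc
  have hane : ENNReal.ofReal a ≠ 0 := by
    simp only [ne_eq, ENNReal.ofReal_eq_zero, not_le]
    exact ha
  have hdiv : (∫⁻ t in Set.Ioc (0:ℝ) T, ENNReal.ofReal a / ENNReal.ofReal ‖x t‖)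
      = ENNReal.ofReal a * ∫⁻ t in Set.Ioc (0:ℝ) T, (ENNReal.ofReal ‖x t‖)⁻¹ := by
    simp_rw [div_eq_mul_inv]
    rw [lintegral_const_mul' _ _ ENNReal.ofReal_ne_top]
  rcases eq_or_ne ((volume.restrict (Set.Ioc (0:ℝ) T)) {t | ‖x t‖ = 0}) 0 with hZ | hZ
  · -- main case : x ≠ 0 a.e.
    have hpos : ∀ᵐ t ∂(volume.restrict (Set.Ioc (0:ℝ) T)), 0 < ‖x t‖ := by
      have hnm := measure_eq_zero_iff_ae_notMem.mp hZ
      filter_upwards [hnm] with t ht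
      exact lt_of_le_of_ne (norm_nonneg _) (Ne.symm ht)
    have hH := holder_step hT hu hpos
    have hBint : IntegrableOn (fun t => ‖x t‖^2) (Set.Ioc 0 T) :=
      ((hxc.norm.pow 2).integrableOn_Icc).mono_set hsub
    have hU2 : (∫⁻ t in Set.Ioc (0:ℝ) T, ENNReal.ofReal ‖x t‖ ^ (2:ℝ))
        = ENNReal.ofReal B := by
      rw [hB_def, ofReal_integral_eq_lintegral_ofReal hBint
        (Filter.Eventually.of_forall fun t => sq_nonneg _)]
      refine lintegral_congr (fun t => ?_)
      rw [ENNReal.ofReal_rpow_of_nonneg (norm_nonneg _) (by norm_num)]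
      congr 1
      rw [show ((2:ℝ) = ((2:ℕ):ℝ)) by norm_num, Real.rpow_natCast]
    set J := ∫⁻ t in Set.Ioc (0:ℝ) T, (ENNReal.ofReal ‖x t‖)⁻¹ with hJ_def
    rcases eq_or_ne J ⊤ with hJt | hJt
    · rw [hdiv, hJt, ENNReal.mul_top hane]
      exact le_top
    · have hJ0 : J ≠ 0 := by
        intro h0
        rw [hU2, h0, ENNReal.zero_rpow_of_pos (by norm_num), mul_zero,
          nonpos_iff_eq_zero, ENNReal.ofReal_eq_zero] at hH
        linarith
      set jr := J.toReal with hjr_def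
      have hjr0 : 0 < jr := ENNReal.toReal_pos hJ0 hJt
      have hHr : T ≤ B ^ ((1:ℝ)/3) * jr ^ ((2:ℝ)/3) := by
        rw [hU2] at hH
        have heq : (ENNReal.ofReal B) ^ ((1:ℝ)/3) * J ^ ((2:ℝ)/3)
            = ENNReal.ofReal (B ^ ((1:ℝ)/3) * jr ^ ((2:ℝ)/3)) := by
          rw [← ENNReal.ofReal_toReal hJt, ENNReal.ofReal_rpow_of_nonneg hB0 (by norm_num),
            ENNReal.ofReal_rpow_of_nonneg ENNReal.toReal_nonneg (by norm_num),
            ← ENNReal.ofReal_mul (Real.rpow_nonneg hB0 _)]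
        rw [heq] at hH
        exact (ENNReal.ofReal_le_ofReal_iff (by positivity)).mp hH
      have hend := endgame hT ha hA0 hB0 hjr0 hHr hBA
      rw [hdiv, ← ENNReal.ofReal_toReal hJt, ← hjr_def,
        ← ENNReal.ofReal_mul ha.le, ← ENNReal.ofReal_add (by positivity) (by positivity)]
      apply ENNReal.ofReal_le_ofReal
      calc (3/2) * (2*π) ^ ((2:ℝ)/3) * a ^ ((2:ℝ)/3) * T ^ ((1:ℝ)/3)
          ≤ A/2 + a * jr := hend
        _ = 1/2 * A + a * jr := by ring
  · -- degenerate case : x vanishes on a set of positive measure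
    have hFm : AEMeasurable (fun t => ENNReal.ofReal a / ENNReal.ofReal ‖x t‖)
        (volume.restrict (Set.Ioc (0:ℝ) T)) := by
      have : (fun t => ENNReal.ofReal a / ENNReal.ofReal ‖x t‖)
          = fun t => ENNReal.ofReal a * (ENNReal.ofReal ‖x t‖)⁻¹ := by
        funext t
        rw [div_eq_mul_inv]
      rw [this]
      exact ((ENNReal.measurable_ofReal.comp_aemeasurable hu).inv).const_mul _
    have hinf : (∫⁻ t in Set.Ioc (0:ℝ) T, ENNReal.ofReal a / ENNReal.ofReal ‖x t‖) = ⊤ := by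
      by_contra hfin
      have hlttop := ae_lt_top' hFm hfin
      refine hZ ?_
      have hsub2 : {t | ‖x t‖ = 0}
          ⊆ {t | ¬ (ENNReal.ofReal a / ENNReal.ofReal ‖x t‖ < ⊤)} := by
        intro t ht
        simp only [Set.mem_setOf_eq] at *
        rw [ht, ENNReal.ofReal_zero, ENNReal.div_zero hane]
        simp
      exact measure_mono_null hsub2 (ae_iff.mp hlttop)
    rw [hinf, add_top]
    exact le_top
end

section
/- (Gordon bound for a loop with m equally spaced zeros.) Let k ≥ 1 and m ≥ 1 be integers and a > 0. Let x : ℝ → ℝᵏ be 1-periodic, absolutely continuous with derivative ẋ square-integrable on [0,1], and suppose x(i/m) = 0 for every integer i with 0 ≤ i ≤ m−1. Then ∫₀¹ ( (1/2)|ẋ(t)|² + a/|x(t)| ) dt ≥ (3/2)·(2π)^{2/3}·a^{2/3}·m^{2/3}, where the integral is an extended-real Lebesgue integral (the term a/|x(t)| is +∞ where x(t) = 0). -/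
open MeasureTheory Real Set

noncomputable section
open scoped ENNReal

/-- time parametrization of the degenerate Kepler ellipse -/
def tau (κ : ℝ) (e : ℝ) : ℝ := κ * (e - Real.sin e)

lemma abs_sin_lt {d : ℝ} (hd : 0 < d) : |Real.sin d| < d := by
  rcases le_or_gt 0 (Real.sin d) with h | h
  · rw [abs_of_nonneg h]; exact Real.sin_lt hd
  · rw [abs_of_neg h]
    have h1 : Real.sin d ≥ -1 := Real.neg_one_le_sin d
    have hπ : d > π := by
      by_contra hc
      push_neg at hc
      exact absurd (Real.sin_nonneg_of_nonneg_of_le_pi hd.le hc) (not_le.2 h)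
    nlinarith [Real.pi_gt_three]

lemma tau_strictMono {κ : ℝ} (hκ : 0 < κ) : StrictMono (tau κ) := by
  intro u v huv
  have h := Real.sin_sub_sin v u
  have h2 : Real.sin v - Real.sin u < v - u := by
    have hd : 0 < (v - u) / 2 := by linarith
    have := abs_sin_lt hd
    have hcos : |Real.cos ((v + u) / 2)| ≤ 1 := Real.abs_cos_le_one _
    calc Real.sin v - Real.sin u = 2 * Real.sin ((v - u)/2) * Real.cos ((v + u)/2) := h
      _ ≤ |2 * Real.sin ((v - u)/2) * Real.cos ((v + u)/2)| := le_abs_self _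
      _ = 2 * |Real.sin ((v - u)/2)| * |Real.cos ((v + u)/2)| := by
          rw [abs_mul, abs_mul, abs_two]
      _ ≤ 2 * |Real.sin ((v - u)/2)| * 1 := by
          apply mul_le_mul_of_nonneg_left hcos; positivity
      _ = 2 * |Real.sin ((v - u)/2)| := by ring
      _ < 2 * ((v - u)/2) := by linarith
      _ = v - u := by ring
  simp only [tau]
  nlinarith

lemma tau_hasDerivAt (κ e : ℝ) : HasDerivAt (tau κ) (κ * (1 - Real.cos e)) e := by
  exact ((hasDerivAt_id e).sub (Real.hasDerivAt_sin e)).const_mul κ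

lemma tau_continuous (κ : ℝ) : Continuous (tau κ) := by
  unfold tau; continuity

lemma tau_surjective {κ : ℝ} (hκ : 0 < κ) : Function.Surjective (tau κ) := by
  have htop : Filter.Tendsto (tau κ) Filter.atTop Filter.atTop := by
    apply Filter.tendsto_atTop_mono (f := fun e => κ * (e - 1))
    · intro e; simp only [tau]
      have := Real.sin_le_one e
      nlinarith
    · exact Filter.Tendsto.const_mul_atTop hκ (Filter.tendsto_atTop_add_const_right _ _ Filter.tendsto_id)
  have hbot : Filter.Tendsto (tau κ) Filter.atBot Filter.atBot := by
    apply Filter.tendsto_atBot_mono (f := fun e => κ * (e + 1))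
    · intro e; simp only [tau]
      have := Real.neg_one_le_sin e
      nlinarith
    · exact Filter.Tendsto.const_mul_atBot hκ (Filter.tendsto_atBot_add_const_right _ _ Filter.tendsto_id)
  exact Continuous.surjective (tau_continuous κ) htop hbot

def tauIso {κ : ℝ} (hκ : 0 < κ) : ℝ ≃o ℝ :=
  StrictMono.orderIsoOfSurjective _ (tau_strictMono hκ) (tau_surjective hκ)

def Einv {κ : ℝ} (hκ : 0 < κ) : ℝ → ℝ := (tauIso hκ).symm

lemma Einv_tau {κ : ℝ} (hκ : 0 < κ) (e : ℝ) : Einv hκ (tau κ e) = e :=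
  StrictMono.orderIsoOfSurjective_symm_apply_self _ _ _ e

lemma tau_Einv {κ : ℝ} (hκ : 0 < κ) (t : ℝ) : tau κ (Einv hκ t) = t := by
  have h1 : ((tauIso hκ) : ℝ → ℝ) = tau κ :=
    StrictMono.coe_orderIsoOfSurjective _ _ _
  have h2 := (tauIso hκ).apply_symm_apply t
  simp only [Einv, ← h1]
  exact h2

lemma Einv_strictMono {κ : ℝ} (hκ : 0 < κ) : StrictMono (Einv hκ) :=
  (tauIso hκ).symm.strictMono

lemma Einv_continuous {κ : ℝ} (hκ : 0 < κ) : Continuous (Einv hκ) :=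
  (tauIso hκ).symm.toHomeomorph.continuous

lemma Einv_measurable {κ : ℝ} (hκ : 0 < κ) : Measurable (Einv hκ) :=
  (Einv_continuous hκ).measurable

lemma cos_lt_one_of_mem {e : ℝ} (he : e ∈ Ioo 0 (2 * π)) : Real.cos e < 1 := by
  rcases he with ⟨h0, h2⟩
  rcases lt_or_eq_of_le (Real.cos_le_one e) with h | h
  · exact h
  · exfalso
    have := (Real.cos_eq_one_iff_of_lt_of_lt (by linarith [Real.pi_pos]) h2).1 h
    exact h0.ne' this

lemma Einv_hasDerivAt {κ : ℝ} (hκ : 0 < κ) {t : ℝ} (h : Real.cos (Einv hκ t) < 1) :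
    HasDerivAt (Einv hκ) (κ * (1 - Real.cos (Einv hκ t)))⁻¹ t := by
  exact HasDerivAt.of_local_left_inverse ((Einv_continuous hκ).continuousAt)
    (tau_hasDerivAt κ (Einv hκ t))
    (by nlinarith)
    (Filter.Eventually.of_forall (tau_Einv hκ))

section calc1
variable {κ b : ℝ} (hκ : 0 < κ) (hb : 0 < b)

lemma sin_half_pos {e : ℝ} (he : e ∈ Ioo 0 (2 * π)) : 0 < Real.sin (e / 2) := by
  apply Real.sin_pos_of_pos_of_lt_pi
  · linarith [he.1]
  · linarith [he.2]

lemma one_sub_cos_eq {e : ℝ} : 1 - Real.cos e = 2 * Real.sin (e / 2) ^ 2 := by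
  have h := Real.cos_two_mul (e / 2)
  have h2 : Real.sin (e/2)^2 + Real.cos (e/2)^2 = 1 := Real.sin_sq_add_cos_sq _
  have : 2 * (e/2) = e := by ring
  rw [this] at h
  nlinarith

lemma one_sub_cos_pos {e : ℝ} (he : e ∈ Ioo 0 (2 * π)) : 0 < 1 - Real.cos e := by
  have := sin_half_pos he
  rw [one_sub_cos_eq]; positivity

/-- derivative of `e ↦ b * cot (e/2)` -/
lemma hasDerivAt_cot_half {e : ℝ} (he : e ∈ Ioo 0 (2 * π)) :
    HasDerivAt (fun u => b * (Real.cos (u / 2) / Real.sin (u / 2)))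
      (-(b * (1 - Real.cos e)⁻¹)) e := by
  have hs := sin_half_pos he
  have hc : HasDerivAt (fun u : ℝ => Real.cos (u / 2)) (-Real.sin (e/2) * (1/2)) e := by
    simpa [Function.comp_def] using (Real.hasDerivAt_cos (e/2)).comp e ((hasDerivAt_id e).div_const 2)
  have hsd : HasDerivAt (fun u : ℝ => Real.sin (u / 2)) (Real.cos (e/2) * (1/2)) e := by
    simpa [Function.comp_def] using (Real.hasDerivAt_sin (e/2)).comp e ((hasDerivAt_id e).div_const 2)
  have hdiv := (hc.div hsd hs.ne')
  have := hdiv.const_mul b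
  convert this using 1
  case e'_4 => rfl
  case e'_5 => rfl
  case e'_8 => rfl
  have h2 : Real.sin (e/2)^2 + Real.cos (e/2)^2 = 1 := Real.sin_sq_add_cos_sq _
  rw [one_sub_cos_eq]
  field_simp
  linear_combination b * h2

/-- derivative of `u ↦ -(b cot(E u / 2))` is `q u`. -/
lemma hasDerivAt_negp {t : ℝ} (he : Einv hκ t ∈ Ioo 0 (2 * π)) :
    HasDerivAt (fun u => -(b * (Real.cos (Einv hκ u / 2) / Real.sin (Einv hκ u / 2))))
      (b / κ * ((1 - Real.cos (Einv hκ t))⁻¹) ^ 2) t := by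
  have h1 := (hasDerivAt_cot_half (b := b) he).comp t
    (Einv_hasDerivAt hκ (cos_lt_one_of_mem he))
  have h2 := h1.neg
  convert h2 using 1
  case e'_4 => rfl
  case e'_5 => rfl
  case e'_8 => rfl
  have hpos := one_sub_cos_pos he
  rw [mul_inv]
  field_simp

/-- derivative of `u ↦ 2 b² κ E u` is `2√(a q)` with `a = b³κ`. -/
lemma hasDerivAt_G1 {t : ℝ} (he : Einv hκ t ∈ Ioo 0 (2 * π)) :
    HasDerivAt (fun u => 2 * b ^ 2 * κ * Einv hκ u)
      (2 * b ^ 2 * (1 - Real.cos (Einv hκ t))⁻¹) t := by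
  have h1 := (Einv_hasDerivAt hκ (cos_lt_one_of_mem he)).const_mul (2 * b ^ 2 * κ)
  convert h1 using 1
  case e'_4 => rfl
  case e'_5 => rfl
  have hpos := one_sub_cos_pos he
  field_simp

/-- derivative of `u ↦ (b²κ/2)(E u + sin E u)` is `p²/2`. -/
lemma hasDerivAt_H {t : ℝ} (he : Einv hκ t ∈ Ioo 0 (2 * π)) :
    HasDerivAt (fun u => b ^ 2 * κ / 2 * (Einv hκ u + Real.sin (Einv hκ u)))
      ((b * (Real.cos (Einv hκ t / 2) / Real.sin (Einv hκ t / 2))) ^ 2 / 2) t := by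
  have hE := Einv_hasDerivAt hκ (cos_lt_one_of_mem he)
  have hsin := (Real.hasDerivAt_sin (Einv hκ t)).comp t hE
  have h1 := ((hE.add hsin).const_mul (b ^ 2 * κ / 2))
  convert h1 using 1
  case e'_4 => rfl
  case e'_5 => rfl
  case e'_8 => rfl
  have hpos := one_sub_cos_pos he
  have hs := sin_half_pos he
  have h2 : Real.sin (Einv hκ t/2)^2 + Real.cos (Einv hκ t/2)^2 = 1 := Real.sin_sq_add_cos_sq _
  have h3 : 1 - Real.cos (Einv hκ t) = 2 * Real.sin (Einv hκ t / 2) ^ 2 := one_sub_cos_eq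
  have h4 : 1 + Real.cos (Einv hκ t) = 2 * Real.cos (Einv hκ t / 2) ^ 2 := by nlinarith
  rw [h3]
  field_simp
  linear_combination (-(b ^ 2)) * h4
end calc1
section pieceInt
variable {κ b : ℝ} (hκ : 0 < κ) (hb : 0 < b)

/-- `p` : momentum comparison function -/
def pf {κ : ℝ} (hκ : 0 < κ) (b : ℝ) (t : ℝ) : ℝ :=
  b * (Real.cos (Einv hκ t / 2) / Real.sin (Einv hκ t / 2))

/-- `q = -p'` -/
def qf {κ : ℝ} (hκ : 0 < κ) (b : ℝ) (t : ℝ) : ℝ :=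
  b / κ * ((1 - Real.cos (Einv hκ t))⁻¹) ^ 2

lemma Einv_zero : Einv hκ 0 = 0 := by
  have : tau κ 0 = 0 := by simp [tau]
  simpa [this] using Einv_tau hκ 0

lemma Einv_L : Einv hκ (2 * π * κ) = 2 * π := by
  have : tau κ (2 * π) = 2 * π * κ := by simp [tau, Real.sin_two_pi]; ring
  rw [← this, Einv_tau]

lemma Einv_mid : Einv hκ (π * κ) = π := by
  have : tau κ π = π * κ := by simp [tau, Real.sin_pi]; ring
  rw [← this, Einv_tau]

lemma Einv_mem {t : ℝ} (ht : t ∈ Ioo 0 (2 * π * κ)) : Einv hκ t ∈ Ioo 0 (2 * π) := by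
  constructor
  · have := Einv_strictMono hκ ht.1
    rwa [Einv_zero hκ] at this
  · have := Einv_strictMono hκ ht.2
    rwa [Einv_L hκ] at this

lemma qf_nonneg (hb : 0 < b) (t : ℝ) : 0 ≤ qf hκ b t := by
  unfold qf
  exact mul_nonneg (div_nonneg hb.le hκ.le) (sq_nonneg _)

lemma qf_measurable : Measurable (qf hκ b) := by
  unfold qf
  exact (measurable_const.mul ((((measurable_const.sub
    (Real.continuous_cos.measurable.comp (Einv_continuous hκ).measurable)).inv).pow_const 2)))

lemma pf_measurable : Measurable (pf hκ b) := by
  unfold pf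
  apply measurable_const.mul
  exact (Real.continuous_cos.measurable.comp
    (((Einv_continuous hκ).measurable).div_const 2)).div
    (Real.continuous_sin.measurable.comp (((Einv_continuous hκ).measurable).div_const 2))

lemma qf_continuousOn : ContinuousOn (qf hκ b) (Ioo 0 (2 * π * κ)) := by
  unfold qf
  apply ContinuousOn.mul continuousOn_const
  apply ContinuousOn.pow
  apply ContinuousOn.inv₀
  · exact (continuous_const.sub (Real.continuous_cos.comp (Einv_continuous hκ))).continuousOn
  · intro t ht
    exact (one_sub_cos_pos (Einv_mem hκ ht)).ne'

lemma pf_continuousOn : ContinuousOn (pf hκ b) (Ioo 0 (2 * π * κ)) := by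
  unfold pf
  apply ContinuousOn.mul continuousOn_const
  apply ContinuousOn.div
  · exact (Real.continuous_cos.comp ((Einv_continuous hκ).div_const 2)).continuousOn
  · exact (Real.continuous_sin.comp ((Einv_continuous hκ).div_const 2)).continuousOn
  · intro t ht
    exact (sin_half_pos (Einv_mem hκ ht)).ne'

lemma pf_mid : pf hκ b (π * κ) = 0 := by
  unfold pf
  rw [Einv_mid hκ]
  simp [Real.cos_pi_div_two]

lemma pf_nonneg_first (hb : 0 < b) {t : ℝ} (ht : t ∈ Ioc 0 (π * κ)) : 0 ≤ pf hκ b t := by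
  rcases eq_or_lt_of_le ht.2 with h | h
  · rw [h, pf_mid hκ]
  · have hmem : t ∈ Ioo 0 (2 * π * κ) := ⟨ht.1, by nlinarith [Real.pi_pos]⟩
    have hE := Einv_mem hκ hmem
    have hlt : Einv hκ t < π := by
      have := Einv_strictMono hκ h
      rwa [Einv_mid hκ] at this
    have hsin := sin_half_pos hE
    have hcos : 0 ≤ Real.cos (Einv hκ t / 2) := by
      apply Real.cos_nonneg_of_mem_Icc
      constructor <;> [linarith [hE.1, Real.pi_pos]; linarith [hlt]]
    unfold pf
    exact mul_nonneg hb.le (div_nonneg hcos hsin.le)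

lemma pf_nonpos_second (hb : 0 < b) {t : ℝ} (ht : t ∈ Ioo (π * κ) (2 * π * κ)) : pf hκ b t ≤ 0 := by
  have hmem : t ∈ Ioo 0 (2 * π * κ) := ⟨by nlinarith [Real.pi_pos, ht.1], ht.2⟩
  have hE := Einv_mem hκ hmem
  have hgt : π < Einv hκ t := by
    have := Einv_strictMono hκ ht.1
    rwa [Einv_mid hκ] at this
  have hsin := sin_half_pos hE
  have hcos : Real.cos (Einv hκ t / 2) ≤ 0 := by
    apply Real.cos_nonpos_of_pi_div_two_le_of_le
    · linarith
    · linarith [hE.2, Real.pi_pos]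
  unfold pf
  have : Real.cos (Einv hκ t / 2) / Real.sin (Einv hκ t / 2) ≤ 0 :=
    div_nonpos_of_nonpos_of_nonneg hcos hsin.le
  exact mul_nonpos_of_nonneg_of_nonpos hb.le this

/-- FTC : integral of q on first half -/
lemma integral_qf_first {s : ℝ} (hs : s ∈ Ioc 0 (π * κ)) :
    ∫ t in s..(π * κ), qf hκ b t = pf hκ b s := by
  have hsub : Icc s (π * κ) ⊆ Ioo 0 (2 * π * κ) := by
    intro t ht
    exact ⟨lt_of_lt_of_le hs.1 ht.1, by nlinarith [Real.pi_pos, ht.2]⟩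
  have h := intervalIntegral.integral_eq_sub_of_hasDerivAt (f := fun u => -(pf hκ b u))
    (f' := qf hκ b) (a := s) (b := π * κ) ?_ ?_
  · rw [h, pf_mid hκ]; simp
  · intro t ht
    rw [uIcc_of_le hs.2] at ht
    exact hasDerivAt_negp hκ (Einv_mem hκ (hsub ht))
  · apply ContinuousOn.intervalIntegrable
    rw [uIcc_of_le hs.2]
    exact (qf_continuousOn hκ).mono hsub

/-- FTC : integral of q on second half -/
lemma integral_qf_second {s : ℝ} (hs : s ∈ Ico (π * κ) (2 * π * κ)) :
    ∫ t in (π * κ)..s, qf hκ b t = -pf hκ b s := by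
  have hsub : Icc (π * κ) s ⊆ Ioo 0 (2 * π * κ) := by
    intro t ht
    exact ⟨by nlinarith [Real.pi_pos, ht.1, hκ], lt_of_le_of_lt ht.2 hs.2⟩
  have h := intervalIntegral.integral_eq_sub_of_hasDerivAt (f := fun u => -(pf hκ b u))
    (f' := qf hκ b) (a := π * κ) (b := s) ?_ ?_
  · rw [h, pf_mid hκ]; simp
  · intro t ht
    rw [uIcc_of_le hs.1] at ht
    exact hasDerivAt_negp hκ (Einv_mem hκ (hsub ht))
  · apply ContinuousOn.intervalIntegrable
    rw [uIcc_of_le hs.1]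
    exact (qf_continuousOn hκ).mono hsub

/-- FTC : integral of `2b²(1-cos E)⁻¹` -/
lemma integral_G1 {α β : ℝ} (hα : 0 < α) (hαβ : α ≤ β) (hβ : β < 2 * π * κ) :
    ∫ t in α..β, 2 * b ^ 2 * (1 - Real.cos (Einv hκ t))⁻¹
      = 2 * b ^ 2 * κ * (Einv hκ β - Einv hκ α) := by
  have hsub : Icc α β ⊆ Ioo 0 (2 * π * κ) := fun t ht =>
    ⟨lt_of_lt_of_le hα ht.1, lt_of_le_of_lt ht.2 hβ⟩
  have h := intervalIntegral.integral_eq_sub_of_hasDerivAt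
    (f := fun u => 2 * b ^ 2 * κ * Einv hκ u)
    (f' := fun t => 2 * b ^ 2 * (1 - Real.cos (Einv hκ t))⁻¹) (a := α) (b := β) ?_ ?_
  · rw [h]; ring
  · intro t ht
    rw [uIcc_of_le hαβ] at ht
    exact hasDerivAt_G1 hκ (Einv_mem hκ (hsub ht))
  · apply ContinuousOn.intervalIntegrable
    rw [uIcc_of_le hαβ]
    apply ContinuousOn.mul continuousOn_const
    apply ContinuousOn.inv₀
    · exact (continuous_const.sub (Real.continuous_cos.comp (Einv_continuous hκ))).continuousOn
    · intro t ht
      exact (one_sub_cos_pos (Einv_mem hκ (hsub ht))).ne'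

/-- FTC : integral of `p²/2` -/
lemma integral_H {α β : ℝ} (hα : 0 < α) (hαβ : α ≤ β) (hβ : β < 2 * π * κ) :
    ∫ t in α..β, pf hκ b t ^ 2 / 2
      = b ^ 2 * κ / 2 * ((Einv hκ β + Real.sin (Einv hκ β)) - (Einv hκ α + Real.sin (Einv hκ α))) := by
  have hsub : Icc α β ⊆ Ioo 0 (2 * π * κ) := fun t ht =>
    ⟨lt_of_lt_of_le hα ht.1, lt_of_le_of_lt ht.2 hβ⟩
  have h := intervalIntegral.integral_eq_sub_of_hasDerivAt
    (f := fun u => b ^ 2 * κ / 2 * (Einv hκ u + Real.sin (Einv hκ u)))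
    (f' := fun t => pf hκ b t ^ 2 / 2) (a := α) (b := β) ?_ ?_
  · rw [h]; ring
  · intro t ht
    rw [uIcc_of_le hαβ] at ht
    exact hasDerivAt_H hκ (Einv_mem hκ (hsub ht))
  · apply ContinuousOn.intervalIntegrable
    rw [uIcc_of_le hαβ]
    exact (((pf_continuousOn hκ).mono hsub).pow 2).div_const 2

end pieceInt
section pieceENN
open scoped ENNReal

lemma one_div_succ_pos (n : ℕ) : (0:ℝ) < 1 / (n + 1) := by positivity

lemma one_div_succ_le_one (n : ℕ) : (1:ℝ) / (n + 1) ≤ 1 := by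
  rw [div_le_one (by positivity)]
  linarith [Nat.cast_nonneg (α := ℝ) n]

lemma one_div_succ_antitone {n₁ n₂ : ℕ} (h : n₁ ≤ n₂) : (1:ℝ) / (n₂ + 1) ≤ 1 / (n₁ + 1) := by
  apply one_div_le_one_div_of_le (by positivity)
  have : (n₁:ℝ) ≤ (n₂:ℝ) := Nat.cast_le.2 h
  linarith

lemma mid_mem {κ : ℝ} (hκ : 0 < κ) : π * κ ∈ Ioo 0 (2 * π * κ) := by
  have hπ := Real.pi_pos
  constructor
  · exact mul_pos hπ hκ
  · nlinarith

lemma one_sub_cos_nonneg (e : ℝ) : 0 ≤ 1 - Real.cos e := by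
  linarith [Real.cos_le_one e]

/-- lintegral of `q` over first-half tail -/
lemma lint_qf_first {κ b : ℝ} (hκ : 0 < κ) (hb : 0 < b) {s : ℝ} (hs : s ∈ Ioc 0 (π * κ)) :
    ∫⁻ t in Ioc s (π * κ), ENNReal.ofReal (qf hκ b t) = ENNReal.ofReal (pf hκ b s) := by
  have hsub : Icc s (π * κ) ⊆ Ioo 0 (2 * π * κ) := fun t ht =>
    ⟨lt_of_lt_of_le hs.1 ht.1, lt_of_le_of_lt ht.2 (mid_mem hκ).2⟩
  rw [← ofReal_integral_eq_lintegral_ofReal]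
  · rw [← intervalIntegral.integral_of_le hs.2, integral_qf_first hκ hs]
  · exact (((qf_continuousOn hκ).mono hsub).integrableOn_Icc).mono_set Ioc_subset_Icc_self
  · exact Filter.Eventually.of_forall fun t => qf_nonneg hκ hb t

/-- lintegral of `q` over second-half initial segment -/
lemma lint_qf_second {κ b : ℝ} (hκ : 0 < κ) (hb : 0 < b) {s : ℝ}
    (hs : s ∈ Ioo (π * κ) (2 * π * κ)) :
    ∫⁻ t in Ioo (π * κ) s, ENNReal.ofReal (qf hκ b t) = ENNReal.ofReal (-pf hκ b s) := by
  have hsub : Icc (π * κ) s ⊆ Ioo 0 (2 * π * κ) := fun t ht =>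
    ⟨lt_of_lt_of_le (mid_mem hκ).1 ht.1, lt_of_le_of_lt ht.2 hs.2⟩
  rw [← ofReal_integral_eq_lintegral_ofReal]
  · rw [← MeasureTheory.integral_Ioc_eq_integral_Ioo,
      ← intervalIntegral.integral_of_le hs.1.le, integral_qf_second hκ ⟨hs.1.le, hs.2⟩]
  · exact (((qf_continuousOn hκ).mono hsub).integrableOn_Icc).mono_set Ioo_subset_Icc_self
  · exact Filter.Eventually.of_forall fun t => qf_nonneg hκ hb t

lemma sin_diff_ge {u v : ℝ} (h : u ≤ v) : -(v - u) ≤ Real.sin v - Real.sin u := by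
  rcases eq_or_lt_of_le h with rfl | h
  · simp
  · have h1 := abs_sin_lt (show (0:ℝ) < (v - u) / 2 by linarith)
    have h2 := Real.sin_sub_sin v u
    have h3 : |Real.cos ((v + u) / 2)| ≤ 1 := Real.abs_cos_le_one _
    have h4 : |Real.sin v - Real.sin u| ≤ 2 * |Real.sin ((v - u) / 2)| := by
      rw [h2, abs_mul, abs_mul, abs_two]
      nlinarith [abs_nonneg (Real.sin ((v - u) / 2))]
    have h5 : |Real.sin v - Real.sin u| ≤ v - u := by
      calc |Real.sin v - Real.sin u| ≤ 2 * |Real.sin ((v - u) / 2)| := h4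
        _ ≤ 2 * ((v - u) / 2) := by linarith
        _ = v - u := by ring
    have := abs_le.1 h5
    linarith [this.1]

/-- C1 : lower bound for the `2√(aq)` lintegral -/
lemma lint_G1_lower {κ b : ℝ} (hκ : 0 < κ) (hb : 0 < b) :
    ENNReal.ofReal (4 * π * (b ^ 2 * κ)) ≤
      ∫⁻ t in Ioo 0 (2 * π * κ), ENNReal.ofReal (2 * b ^ 2 * (1 - Real.cos (Einv hκ t))⁻¹) := by
  have hπ := Real.pi_pos
  have key : ∀ n : ℕ, ENNReal.ofReal (2 * b ^ 2 * κ * (2 * π - 2 * (1 / (n + 1)))) ≤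
      ∫⁻ t in Ioo 0 (2 * π * κ), ENNReal.ofReal (2 * b ^ 2 * (1 - Real.cos (Einv hκ t))⁻¹) := by
    intro n
    set δ : ℝ := 1 / (n + 1) with hδdef
    have hδ0 : 0 < δ := one_div_succ_pos n
    have hδπ : δ ≤ 1 := one_div_succ_le_one n
    have hδle : δ ≤ 2 * π - δ := by nlinarith [Real.pi_gt_three]
    set α := tau κ δ with hαdef
    set β := tau κ (2 * π - δ) with hβdef
    have hα0 : 0 < α := by
      have h0 : tau κ 0 = 0 := by simp [tau]
      rw [hαdef, ← h0]
      exact tau_strictMono hκ hδ0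
    have hαβ : α ≤ β := (tau_strictMono hκ).monotone hδle
    have hβL : β < 2 * π * κ := by
      have h2 : tau κ (2 * π) = 2 * π * κ := by simp [tau, Real.sin_two_pi]; ring
      rw [← h2]
      exact tau_strictMono hκ (by linarith)
    have hsub : Ioc α β ⊆ Ioo 0 (2 * π * κ) := fun t ht =>
      ⟨lt_trans hα0 ht.1, lt_of_le_of_lt ht.2 hβL⟩
    have hIccsub : Icc α β ⊆ Ioo 0 (2 * π * κ) := fun t ht =>
      ⟨lt_of_lt_of_le hα0 ht.1, lt_of_le_of_lt ht.2 hβL⟩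
    calc ENNReal.ofReal (2 * b ^ 2 * κ * (2 * π - 2 * δ))
        = ENNReal.ofReal (∫ t in α..β, 2 * b ^ 2 * (1 - Real.cos (Einv hκ t))⁻¹) := by
          rw [integral_G1 hκ hα0 hαβ hβL]
          congr 1
          rw [hβdef, hαdef, Einv_tau hκ, Einv_tau hκ]
          ring
      _ = ∫⁻ t in Ioc α β, ENNReal.ofReal (2 * b ^ 2 * (1 - Real.cos (Einv hκ t))⁻¹) := by
          rw [← ofReal_integral_eq_lintegral_ofReal, intervalIntegral.integral_of_le hαβ]
          · apply IntegrableOn.mono_set _ Ioc_subset_Icc_self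
            apply ContinuousOn.integrableOn_Icc
            apply ContinuousOn.mul continuousOn_const
            apply ContinuousOn.inv₀
            · exact (continuous_const.sub
                (Real.continuous_cos.comp (Einv_continuous hκ))).continuousOn
            · intro t ht
              exact (one_sub_cos_pos (Einv_mem hκ (hIccsub ht))).ne'
          · exact Filter.Eventually.of_forall fun t => by
              have := one_sub_cos_nonneg (Einv hκ t)
              positivity
      _ ≤ _ := lintegral_mono_set hsub
  have h1 : Filter.Tendsto (fun n : ℕ => 1 / ((n : ℝ) + 1)) Filter.atTop (nhds 0) :=
    tendsto_one_div_add_atTop_nhds_zero_nat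
  have h2 : Filter.Tendsto
      (fun n : ℕ => ENNReal.ofReal (2 * b ^ 2 * κ * (2 * π - 2 * (1 / ((n : ℝ) + 1)))))
      Filter.atTop (nhds (ENNReal.ofReal (4 * π * (b ^ 2 * κ)))) := by
    have h3 : Filter.Tendsto (fun n : ℕ => 2 * b ^ 2 * κ * (2 * π - 2 * (1 / ((n : ℝ) + 1))))
        Filter.atTop (nhds (2 * b ^ 2 * κ * (2 * π - 2 * 0))) :=
      Filter.Tendsto.const_mul _ (tendsto_const_nhds.sub (h1.const_mul 2))
    have h4 : 2 * b ^ 2 * κ * (2 * π - 2 * 0) = 4 * π * (b ^ 2 * κ) := by ring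
    rw [h4] at h3
    exact ENNReal.tendsto_ofReal h3
  exact le_of_tendsto' h2 key

/-- C2 : upper bound for the `p²/2` lintegral -/
lemma lint_H_upper {κ b : ℝ} (hκ : 0 < κ) (hb : 0 < b) :
    ∫⁻ t in Ioo 0 (2 * π * κ), ENNReal.ofReal (pf hκ b t ^ 2 / 2) ≤
      ENNReal.ofReal (π * (b ^ 2 * κ)) := by
  have hπ := Real.pi_pos
  set φ : ℝ → ℝ≥0∞ := fun t => ENNReal.ofReal (pf hκ b t ^ 2 / 2) with hφdef
  have hφmeas : Measurable φ :=
    (((pf_measurable hκ).pow_const 2).div_const 2).ennreal_ofReal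
  set A : ℕ → Set ℝ := fun n => Icc (tau κ (1 / (n + 1))) (tau κ (2 * π - 1 / (n + 1)))
    with hAdef
  have hδle : ∀ n : ℕ, (1:ℝ) / (n + 1) ≤ 2 * π - 1 / (n + 1) := by
    intro n
    have := one_div_succ_le_one n
    nlinarith [Real.pi_gt_three]
  have hAsub : ∀ n, A n ⊆ Ioo 0 (2 * π * κ) := by
    intro n t ht
    constructor
    · have h0 : tau κ 0 = 0 := by simp [tau]
      have : tau κ 0 < tau κ (1 / (n + 1)) := tau_strictMono hκ (one_div_succ_pos n)
      rw [h0] at this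
      exact lt_of_lt_of_le this ht.1
    · have h2 : tau κ (2 * π) = 2 * π * κ := by simp [tau, Real.sin_two_pi]; ring
      have : tau κ (2 * π - 1 / (n + 1)) < tau κ (2 * π) :=
        tau_strictMono hκ (by linarith [one_div_succ_pos n])
      rw [h2] at this
      exact lt_of_le_of_lt ht.2 this
  have hmono : Monotone (fun n => (A n).indicator φ) := by
    intro n₁ n₂ h
    apply indicator_le_indicator_of_subset
    · apply Icc_subset_Icc
      · exact (tau_strictMono hκ).monotone (one_div_succ_antitone h)
      · exact (tau_strictMono hκ).monotone (by linarith [one_div_succ_antitone h])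
    · intro t; exact zero_le
  have hsup : ∀ t, (Ioo 0 (2 * π * κ)).indicator φ t = ⨆ n, (A n).indicator φ t := by
    intro t
    rcases Classical.em (t ∈ Ioo 0 (2 * π * κ)) with ht | ht
    · rw [indicator_of_mem ht]
      have hE := Einv_mem hκ ht
      obtain ⟨n, hn⟩ := exists_nat_one_div_lt
        (show (0:ℝ) < min (Einv hκ t) (2 * π - Einv hκ t) from
          lt_min hE.1 (by linarith [hE.2]))
      have htA : t ∈ A n := by
        constructor
        · have h1 : (1:ℝ)/(n+1) ≤ Einv hκ t := le_trans hn.le (min_le_left _ _)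
          have := (tau_strictMono hκ).monotone h1
          rwa [tau_Einv hκ] at this
        · have h1 : Einv hκ t ≤ 2 * π - 1/(n+1) := by
            have := le_trans hn.le (min_le_right _ _)
            linarith
          have := (tau_strictMono hκ).monotone h1
          rwa [tau_Einv hκ] at this
      apply le_antisymm
      · calc φ t = (A n).indicator φ t := (indicator_of_mem htA φ).symm
          _ ≤ ⨆ n, (A n).indicator φ t := le_iSup (fun n => (A n).indicator φ t) n
      · apply iSup_le
        intro n'
        rcases Classical.em (t ∈ A n') with h | h
        · rw [indicator_of_mem h]
        · rw [indicator_of_notMem h]; exact zero_le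
    · rw [indicator_of_notMem ht]
      refine le_antisymm zero_le (iSup_le fun n => ?_)
      rw [indicator_of_notMem (fun hc => ht (hAsub n hc))]
  calc ∫⁻ t in Ioo 0 (2 * π * κ), φ t
      = ∫⁻ t, (Ioo 0 (2 * π * κ)).indicator φ t := (lintegral_indicator measurableSet_Ioo φ).symm
    _ = ∫⁻ t, ⨆ n, (A n).indicator φ t := lintegral_congr hsup
    _ = ⨆ n, ∫⁻ t, (A n).indicator φ t :=
        lintegral_iSup (fun n => hφmeas.indicator measurableSet_Icc) hmono
    _ ≤ ENNReal.ofReal (π * (b ^ 2 * κ)) := by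
        apply iSup_le
        intro n
        set δ : ℝ := 1 / (n + 1) with hδdef
        have hδ0 : 0 < δ := one_div_succ_pos n
        set α := tau κ δ with hαdef
        set β := tau κ (2 * π - δ) with hβdef
        have hα0 : 0 < α := by
          have h0 : tau κ 0 = 0 := by simp [tau]
          rw [hαdef, ← h0]
          exact tau_strictMono hκ hδ0
        have hαβ : α ≤ β := (tau_strictMono hκ).monotone (hδle n)
        have hβL : β < 2 * π * κ := by
          have h2 : tau κ (2 * π) = 2 * π * κ := by simp [tau, Real.sin_two_pi]; ring
          rw [← h2]
          exact tau_strictMono hκ (by linarith)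
        have hIccsub : Icc α β ⊆ Ioo 0 (2 * π * κ) := fun u hu =>
          ⟨lt_of_lt_of_le hα0 hu.1, lt_of_le_of_lt hu.2 hβL⟩
        rw [lintegral_indicator measurableSet_Icc]
        rw [hφdef]
        rw [← ofReal_integral_eq_lintegral_ofReal]
        · apply ENNReal.ofReal_le_ofReal
          rw [MeasureTheory.integral_Icc_eq_integral_Ioc,
            ← intervalIntegral.integral_of_le hαβ, integral_H hκ hα0 hαβ hβL]
          rw [hβdef, hαdef, Einv_tau hκ, Einv_tau hκ]
          have hs1 : (2 * π - δ) + Real.sin (2 * π - δ) ≤ 2 * π := by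
            have := sin_diff_ge (show 2 * π - δ ≤ 2 * π by linarith)
            rw [Real.sin_two_pi] at this
            linarith
          have hs2 : 0 ≤ δ + Real.sin δ := by
            have := sin_diff_ge (show (0:ℝ) ≤ δ from hδ0.le)
            rw [Real.sin_zero] at this
            linarith
          have hbk : 0 < b ^ 2 * κ := by positivity
          nlinarith [hbk]
        · exact (((pf_continuousOn hκ).mono hIccsub).pow 2).div_const 2 |>.integrableOn_Icc
        · exact Filter.Eventually.of_forall fun t => by positivity

end pieceENN
section half
variable {κ b : ℝ}

/-- pointwise indicator flip -/
lemma indicator_flip (g : ℝ → ℝ) (hκ : 0 < κ) (t s : ℝ) :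
    ENNReal.ofReal (qf hκ b t) * (Iic t).indicator (fun s' => ENNReal.ofReal (g s')) s
      = (Ici s).indicator (fun t' => ENNReal.ofReal (qf hκ b t') * ENNReal.ofReal (g s)) t := by
  rcases Classical.em (s ≤ t) with h | h
  · rw [indicator_of_mem (mem_Iic.2 h), indicator_of_mem (mem_Ici.2 h)]
  · rw [indicator_of_notMem (fun hc => h (mem_Iic.1 hc)),
      indicator_of_notMem (fun hc => h (mem_Ici.1 hc)), mul_zero]

lemma indicator_flip2 (g : ℝ → ℝ) (hκ : 0 < κ) (t s : ℝ) :
    ENNReal.ofReal (qf hκ b t) * (Ioi t).indicator (fun s' => ENNReal.ofReal (g s')) s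
      = (Iio s).indicator (fun t' => ENNReal.ofReal (qf hκ b t') * ENNReal.ofReal (g s)) t := by
  rcases Classical.em (t < s) with h | h
  · rw [indicator_of_mem (mem_Ioi.2 h), indicator_of_mem (mem_Iio.2 h)]
  · rw [indicator_of_notMem (fun hc => h (mem_Ioi.1 hc)),
      indicator_of_notMem (fun hc => h (mem_Iio.1 hc)), mul_zero]

lemma uncurry_meas1 (g : ℝ → ℝ) (hκ : 0 < κ) (hgm : Measurable g) :
    Measurable (Function.uncurry fun t s =>
      ENNReal.ofReal (qf hκ b t) * (Iic t).indicator (fun s' => ENNReal.ofReal (g s')) s) := by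
  have h1 : (Function.uncurry fun t s =>
      ENNReal.ofReal (qf hκ b t) * (Iic t).indicator (fun s' => ENNReal.ofReal (g s')) s)
      = fun p : ℝ × ℝ => ENNReal.ofReal (qf hκ b p.1) *
        ({q : ℝ × ℝ | q.2 ≤ q.1}.indicator (fun q => ENNReal.ofReal (g q.2)) p) := by
    funext p
    simp only [Function.uncurry]
    rcases Classical.em (p.2 ≤ p.1) with h | h
    · rw [indicator_of_mem (mem_Iic.2 h), indicator_of_mem (by exact h)]
    · rw [indicator_of_notMem (fun hc => h (mem_Iic.1 hc)), indicator_of_notMem (by exact h)]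
  rw [h1]
  apply Measurable.mul
  · exact ((qf_measurable hκ).comp measurable_fst).ennreal_ofReal
  · exact Measurable.indicator ((hgm.comp measurable_snd).ennreal_ofReal)
      (measurableSet_le measurable_snd measurable_fst)

lemma uncurry_meas2 (g : ℝ → ℝ) (hκ : 0 < κ) (hgm : Measurable g) :
    Measurable (Function.uncurry fun t s =>
      ENNReal.ofReal (qf hκ b t) * (Ioi t).indicator (fun s' => ENNReal.ofReal (g s')) s) := by
  have h1 : (Function.uncurry fun t s =>
      ENNReal.ofReal (qf hκ b t) * (Ioi t).indicator (fun s' => ENNReal.ofReal (g s')) s)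
      = fun p : ℝ × ℝ => ENNReal.ofReal (qf hκ b p.1) *
        ({q : ℝ × ℝ | q.1 < q.2}.indicator (fun q => ENNReal.ofReal (g q.2)) p) := by
    funext p
    simp only [Function.uncurry]
    rcases Classical.em (p.1 < p.2) with h | h
    · rw [indicator_of_mem (mem_Ioi.2 h), indicator_of_mem (by exact h)]
    · rw [indicator_of_notMem (fun hc => h (mem_Ioi.1 hc)), indicator_of_notMem (by exact h)]
  rw [h1]
  apply Measurable.mul
  · exact ((qf_measurable hκ).comp measurable_fst).ennreal_ofReal
  · exact Measurable.indicator ((hgm.comp measurable_snd).ennreal_ofReal)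
      (measurableSet_lt measurable_fst measurable_snd)

/-- First-half Fubini bound. -/
lemma half1 (hκ : 0 < κ) (hb : 0 < b) (g : ℝ → ℝ) (hg0 : ∀ s, 0 ≤ g s) (hgm : Measurable g)
    (hgi : IntegrableOn g (Ioc 0 (π * κ))) :
    ∫⁻ t in Ioc 0 (π * κ),
        ENNReal.ofReal (qf hκ b t) * ENNReal.ofReal (∫ s in (0:ℝ)..t, g s)
      ≤ ∫⁻ t in Ioc 0 (π * κ),
          (ENNReal.ofReal (g t ^ 2 / 2) + ENNReal.ofReal (pf hκ b t ^ 2 / 2)) := by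
  set mid := π * κ with hmid
  have hmid0 : 0 < mid := (mid_mem hκ).1
  -- rewrite the real integral as a set lintegral
  have step1 : ∀ t ∈ Ioc 0 mid, ENNReal.ofReal (qf hκ b t) * ENNReal.ofReal (∫ s in (0:ℝ)..t, g s)
      = ENNReal.ofReal (qf hκ b t) * ∫⁻ s in Ioc 0 t, ENNReal.ofReal (g s) := by
    intro t ht
    congr 1
    rw [intervalIntegral.integral_of_le ht.1.le]
    exact ofReal_integral_eq_lintegral_ofReal
      (hgi.mono_set (Ioc_subset_Ioc le_rfl ht.2))
      (Filter.Eventually.of_forall fun s => hg0 s)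
  have step2 : ∀ t ∈ Ioc 0 mid, (∫⁻ s in Ioc 0 t, ENNReal.ofReal (g s))
      = ∫⁻ s in Ioc 0 mid, (Iic t).indicator (fun s' => ENNReal.ofReal (g s')) s := by
    intro t ht
    have hset : Iic t ∩ Ioc 0 mid = Ioc 0 t := by
      ext s
      simp only [mem_inter_iff, mem_Iic, mem_Ioc]
      constructor
      · rintro ⟨h1, h2, h3⟩; exact ⟨h2, h1⟩
      · rintro ⟨h1, h2⟩; exact ⟨h2, h1, le_trans h2 ht.2⟩
    rw [lintegral_indicator measurableSet_Iic, Measure.restrict_restrict measurableSet_Iic, hset]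
  calc ∫⁻ t in Ioc 0 mid, ENNReal.ofReal (qf hκ b t) * ENNReal.ofReal (∫ s in (0:ℝ)..t, g s)
      = ∫⁻ t in Ioc 0 mid, ∫⁻ s in Ioc 0 mid,
          ENNReal.ofReal (qf hκ b t) * (Iic t).indicator (fun s' => ENNReal.ofReal (g s')) s := by
        apply setLIntegral_congr_fun measurableSet_Ioc
        intro t ht
        dsimp only
        rw [step1 t ht, step2 t ht, lintegral_const_mul']
        exact ENNReal.ofReal_ne_top
    _ = ∫⁻ s in Ioc 0 mid, ∫⁻ t in Ioc 0 mid,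
          ENNReal.ofReal (qf hκ b t) * (Iic t).indicator (fun s' => ENNReal.ofReal (g s')) s :=
        lintegral_lintegral_swap ((uncurry_meas1 g hκ hgm).aemeasurable)
    _ = ∫⁻ s in Ioc 0 mid, ENNReal.ofReal (pf hκ b s) * ENNReal.ofReal (g s) := by
        apply setLIntegral_congr_fun measurableSet_Ioc
        intro s hs
        dsimp only
        have hflip : ∀ t, ENNReal.ofReal (qf hκ b t) *
            (Iic t).indicator (fun s' => ENNReal.ofReal (g s')) s
            = (Ici s).indicator (fun t' => ENNReal.ofReal (qf hκ b t') * ENNReal.ofReal (g s)) t :=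
          fun t => indicator_flip g hκ t s
        rw [lintegral_congr hflip, lintegral_indicator measurableSet_Ici,
          Measure.restrict_restrict measurableSet_Ici]
        have hset : Ici s ∩ Ioc 0 mid = Icc s mid := by
          ext u
          simp only [mem_inter_iff, mem_Ici, mem_Ioc, mem_Icc]
          constructor
          · rintro ⟨h1, _, h3⟩; exact ⟨h1, h3⟩
          · rintro ⟨h1, h2⟩; exact ⟨h1, lt_of_lt_of_le hs.1 h1, h2⟩
        rw [hset, lintegral_mul_const' _ _ ENNReal.ofReal_ne_top]
        congr 1
        rw [← Measure.restrict_congr_set Ioc_ae_eq_Icc]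
        exact lint_qf_first hκ hb hs
    _ ≤ ∫⁻ t in Ioc 0 mid, (ENNReal.ofReal (g t ^ 2 / 2) + ENNReal.ofReal (pf hκ b t ^ 2 / 2)) := by
        apply setLIntegral_mono_ae
        · exact ((hgm.pow_const 2).div_const 2).ennreal_ofReal.add
            (((pf_measurable hκ).pow_const 2).div_const 2).ennreal_ofReal |>.aemeasurable
        · apply Filter.Eventually.of_forall
          intro s hs
          rw [← ENNReal.ofReal_mul (pf_nonneg_first hκ hb hs), ← ENNReal.ofReal_add
            (by positivity) (by positivity)]
          apply ENNReal.ofReal_le_ofReal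
          nlinarith [sq_nonneg (g s - pf hκ b s), hg0 s, pf_nonneg_first hκ hb hs]

/-- Second-half Fubini bound. -/
lemma half2 (hκ : 0 < κ) (hb : 0 < b) (g : ℝ → ℝ) (hg0 : ∀ s, 0 ≤ g s) (hgm : Measurable g)
    (hgi : IntegrableOn g (Ioc (π * κ) (2 * π * κ))) :
    ∫⁻ t in Ioo (π * κ) (2 * π * κ),
        ENNReal.ofReal (qf hκ b t) * ENNReal.ofReal (∫ s in t..(2 * π * κ), g s)
      ≤ ∫⁻ t in Ioc (π * κ) (2 * π * κ),
          (ENNReal.ofReal (g t ^ 2 / 2) + ENNReal.ofReal (pf hκ b t ^ 2 / 2)) := by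
  set mid := π * κ with hmiddef
  set L := 2 * π * κ with hLdef
  have hmidL : mid < L := (mid_mem hκ).2
  have step1 : ∀ t ∈ Ioo mid L, ENNReal.ofReal (qf hκ b t) * ENNReal.ofReal (∫ s in t..L, g s)
      = ENNReal.ofReal (qf hκ b t) * ∫⁻ s in Ioc t L, ENNReal.ofReal (g s) := by
    intro t ht
    congr 1
    rw [intervalIntegral.integral_of_le ht.2.le]
    exact ofReal_integral_eq_lintegral_ofReal
      (hgi.mono_set (Ioc_subset_Ioc ht.1.le le_rfl))
      (Filter.Eventually.of_forall fun s => hg0 s)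
  have step2 : ∀ t ∈ Ioo mid L, (∫⁻ s in Ioc t L, ENNReal.ofReal (g s))
      = ∫⁻ s in Ioc mid L, (Ioi t).indicator (fun s' => ENNReal.ofReal (g s')) s := by
    intro t ht
    have hset : Ioi t ∩ Ioc mid L = Ioc t L := by
      ext s
      simp only [mem_inter_iff, mem_Ioi, mem_Ioc]
      constructor
      · rintro ⟨h1, _, h3⟩; exact ⟨h1, h3⟩
      · rintro ⟨h1, h2⟩; exact ⟨h1, lt_trans ht.1 h1, h2⟩
    rw [lintegral_indicator measurableSet_Ioi, Measure.restrict_restrict measurableSet_Ioi, hset]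
  calc ∫⁻ t in Ioo mid L, ENNReal.ofReal (qf hκ b t) * ENNReal.ofReal (∫ s in t..L, g s)
      = ∫⁻ t in Ioo mid L, ∫⁻ s in Ioc mid L,
          ENNReal.ofReal (qf hκ b t) * (Ioi t).indicator (fun s' => ENNReal.ofReal (g s')) s := by
        apply setLIntegral_congr_fun measurableSet_Ioo
        intro t ht
        dsimp only
        rw [step1 t ht, step2 t ht, lintegral_const_mul']
        exact ENNReal.ofReal_ne_top
    _ = ∫⁻ s in Ioc mid L, ∫⁻ t in Ioo mid L,
          ENNReal.ofReal (qf hκ b t) * (Ioi t).indicator (fun s' => ENNReal.ofReal (g s')) s :=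
        lintegral_lintegral_swap ((uncurry_meas2 g hκ hgm).aemeasurable)
    _ = ∫⁻ s in Ioo mid L, ∫⁻ t in Ioo mid L,
          ENNReal.ofReal (qf hκ b t) * (Ioi t).indicator (fun s' => ENNReal.ofReal (g s')) s := by
        rw [← Measure.restrict_congr_set Ioo_ae_eq_Ioc]
    _ = ∫⁻ s in Ioo mid L, ENNReal.ofReal (-pf hκ b s) * ENNReal.ofReal (g s) := by
        apply setLIntegral_congr_fun measurableSet_Ioo
        intro s hs
        dsimp only
        have hflip : ∀ t, ENNReal.ofReal (qf hκ b t) *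
            (Ioi t).indicator (fun s' => ENNReal.ofReal (g s')) s
            = (Iio s).indicator (fun t' => ENNReal.ofReal (qf hκ b t') * ENNReal.ofReal (g s)) t :=
          fun t => indicator_flip2 g hκ t s
        rw [lintegral_congr hflip, lintegral_indicator measurableSet_Iio,
          Measure.restrict_restrict measurableSet_Iio]
        have hset : Iio s ∩ Ioo mid L = Ioo mid s := by
          ext u
          simp only [mem_inter_iff, mem_Iio, mem_Ioo]
          constructor
          · rintro ⟨h1, h2, _⟩; exact ⟨h2, h1⟩
          · rintro ⟨h1, h2⟩; exact ⟨h2, h1, lt_trans h2 hs.2⟩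
        rw [hset, lintegral_mul_const' _ _ ENNReal.ofReal_ne_top]
        congr 1
        exact lint_qf_second hκ hb hs
    _ ≤ ∫⁻ t in Ioo mid L, (ENNReal.ofReal (g t ^ 2 / 2) + ENNReal.ofReal (pf hκ b t ^ 2 / 2)) := by
        apply setLIntegral_mono_ae
        · exact ((hgm.pow_const 2).div_const 2).ennreal_ofReal.add
            (((pf_measurable hκ).pow_const 2).div_const 2).ennreal_ofReal |>.aemeasurable
        · apply Filter.Eventually.of_forall
          intro s hs
          have hp : 0 ≤ -pf hκ b s := neg_nonneg.2 (pf_nonpos_second hκ hb hs)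
          rw [← ENNReal.ofReal_mul hp, ← ENNReal.ofReal_add (by positivity) (by positivity)]
          apply ENNReal.ofReal_le_ofReal
          nlinarith [sq_nonneg (g s - (-pf hκ b s)), hg0 s, hp]
    _ ≤ ∫⁻ t in Ioc mid L, (ENNReal.ofReal (g t ^ 2 / 2) + ENNReal.ofReal (pf hκ b t ^ 2 / 2)) :=
        lintegral_mono_set Ioo_subset_Ioc_self

end half
/-- Main single-arch (piece) lower bound. -/
lemma piece {κ b : ℝ} (hκ : 0 < κ) (hb : 0 < b) (g r : ℝ → ℝ)
    (hg0 : ∀ s, 0 ≤ g s) (hgm : Measurable g)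
    (hgi : IntegrableOn g (Ioc 0 (2 * π * κ)))
    (hr0 : ∀ t ∈ Ioo 0 (2 * π * κ), 0 ≤ r t)
    (hrm : AEMeasurable r (volume.restrict (Ioo 0 (2 * π * κ))))
    (h1 : ∀ t ∈ Ioc 0 (π * κ), r t ≤ ∫ s in (0:ℝ)..t, g s)
    (h2 : ∀ t ∈ Ioo (π * κ) (2 * π * κ), r t ≤ ∫ s in t..(2 * π * κ), g s) :
    ENNReal.ofReal (3 * π * (b ^ 2 * κ)) ≤
      ∫⁻ t in Ioo 0 (2 * π * κ), (ENNReal.ofReal (g t ^ 2 / 2)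
        + ENNReal.ofReal (b ^ 3 * κ) / ENNReal.ofReal (r t)) := by
  set mid := π * κ with hmiddef
  set L := 2 * π * κ with hLdef
  have hmidL : mid < L := (mid_mem hκ).2
  have hmid0 : 0 < mid := (mid_mem hκ).1
  have ha : (0:ℝ) < b ^ 3 * κ := by positivity
  set pot : ℝ → ℝ≥0∞ := fun t => ENNReal.ofReal (b ^ 3 * κ) / ENNReal.ofReal (r t) with hpotdef
  set kin : ℝ → ℝ≥0∞ := fun t => ENNReal.ofReal (g t ^ 2 / 2) with hkindef
  set pp : ℝ → ℝ≥0∞ := fun t => ENNReal.ofReal (pf hκ b t ^ 2 / 2) with hppdef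
  -- pointwise AM–GM
  have hptwise : ∀ t ∈ Ioo 0 L, ENNReal.ofReal (2 * b ^ 2 * (1 - Real.cos (Einv hκ t))⁻¹)
      ≤ pot t + ENNReal.ofReal (qf hκ b t * r t) := by
    intro t ht
    have hE := Einv_mem hκ ht
    have hc := one_sub_cos_pos hE
    have hq := qf_nonneg hκ hb t
    have hid : 2 * b ^ 2 * (1 - Real.cos (Einv hκ t))⁻¹
        = 2 * Real.sqrt ((b ^ 3 * κ) * qf hκ b t) := by
      have h' : (b ^ 3 * κ) * qf hκ b t = (b ^ 2 * (1 - Real.cos (Einv hκ t))⁻¹) ^ 2 := by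
        unfold qf
        field_simp
      rw [h', Real.sqrt_sq (by positivity)]
      ring
    rcases eq_or_lt_of_le (hr0 t ht) with hr | hr
    · have htop : pot t = ⊤ := by
        rw [hpotdef]
        simp only [← hr, ENNReal.ofReal_zero, ENNReal.div_zero (ENNReal.ofReal_pos.2 ha).ne']
      rw [htop]
      simp
    · have key : 2 * b ^ 2 * (1 - Real.cos (Einv hκ t))⁻¹
          ≤ (b ^ 3 * κ) / r t + qf hκ b t * r t := by
        rw [hid]
        have hs : Real.sqrt ((b ^ 3 * κ) * qf hκ b t)
            = Real.sqrt ((b ^ 3 * κ) / r t) * Real.sqrt (qf hκ b t * r t) := by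
          rw [← Real.sqrt_mul (by positivity)]
          congr 1
          field_simp
        rw [hs]
        have h1' := Real.sq_sqrt (show (0:ℝ) ≤ (b ^ 3 * κ) / r t by positivity)
        have h2' := Real.sq_sqrt (mul_nonneg hq hr.le)
        nlinarith [sq_nonneg (Real.sqrt ((b ^ 3 * κ) / r t) - Real.sqrt (qf hκ b t * r t)),
          Real.sqrt_nonneg ((b ^ 3 * κ) / r t), Real.sqrt_nonneg (qf hκ b t * r t)]
      calc ENNReal.ofReal (2 * b ^ 2 * (1 - Real.cos (Einv hκ t))⁻¹)
          ≤ ENNReal.ofReal ((b ^ 3 * κ) / r t + qf hκ b t * r t) := ENNReal.ofReal_le_ofReal key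
        _ = ENNReal.ofReal ((b ^ 3 * κ) / r t) + ENNReal.ofReal (qf hκ b t * r t) :=
            ENNReal.ofReal_add (by positivity) (mul_nonneg hq hr.le)
        _ = pot t + ENNReal.ofReal (qf hκ b t * r t) := by rw [ENNReal.ofReal_div_of_pos hr]
  -- measurability of Qr integrand
  have hQrm : AEMeasurable (fun t => ENNReal.ofReal (qf hκ b t * r t))
      (volume.restrict (Ioo 0 L)) :=
    (((qf_measurable hκ).aemeasurable.restrict).mul hrm).ennreal_ofReal
  -- Step 1 : C1 ≤ Φ + Qr
  have step1 : ENNReal.ofReal (4 * π * (b ^ 2 * κ))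
      ≤ (∫⁻ t in Ioo 0 L, pot t) + ∫⁻ t in Ioo 0 L, ENNReal.ofReal (qf hκ b t * r t) := by
    calc ENNReal.ofReal (4 * π * (b ^ 2 * κ))
        ≤ ∫⁻ t in Ioo 0 L, ENNReal.ofReal (2 * b ^ 2 * (1 - Real.cos (Einv hκ t))⁻¹) :=
          lint_G1_lower hκ hb
      _ ≤ ∫⁻ t in Ioo 0 L, (pot t + ENNReal.ofReal (qf hκ b t * r t)) :=
          setLIntegral_mono' measurableSet_Ioo hptwise
      _ = (∫⁻ t in Ioo 0 L, pot t) + ∫⁻ t in Ioo 0 L, ENNReal.ofReal (qf hκ b t * r t) :=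
          lintegral_add_right' _ hQrm
  -- Step 2 : Qr ≤ Kp + C2
  have hkinm : Measurable kin := ((hgm.pow_const 2).div_const 2).ennreal_ofReal
  have hdisj : Disjoint (Ioc 0 mid) (Ioo mid L) := by
    apply Set.disjoint_left.2
    intro t h1t h2t
    exact absurd h2t.1 (not_lt.2 h1t.2)
  have hdisj2 : Disjoint (Ioc 0 mid) (Ioc mid L) := by
    apply Set.disjoint_left.2
    intro t h1t h2t
    exact absurd h2t.1 (not_lt.2 h1t.2)
  have step2 : (∫⁻ t in Ioo 0 L, ENNReal.ofReal (qf hκ b t * r t))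
      ≤ (∫⁻ t in Ioo 0 L, kin t) + ∫⁻ t in Ioo 0 L, pp t := by
    have hsplitset : Ioc 0 mid ∪ Ioo mid L = Ioo 0 L := Ioc_union_Ioo_eq_Ioo hmid0.le hmidL
    have hq1 : (∫⁻ t in Ioc 0 mid, ENNReal.ofReal (qf hκ b t * r t))
        ≤ ∫⁻ t in Ioc 0 mid, (kin t + pp t) := by
      calc (∫⁻ t in Ioc 0 mid, ENNReal.ofReal (qf hκ b t * r t))
          ≤ ∫⁻ t in Ioc 0 mid,
              ENNReal.ofReal (qf hκ b t) * ENNReal.ofReal (∫ s in (0:ℝ)..t, g s) := by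
            apply setLIntegral_mono' measurableSet_Ioc
            intro t ht
            rw [ENNReal.ofReal_mul (qf_nonneg hκ hb t)]
            exact mul_le_mul_right (ENNReal.ofReal_le_ofReal (h1 t ht)) _
        _ ≤ ∫⁻ t in Ioc 0 mid, (kin t + pp t) :=
            half1 hκ hb g hg0 hgm (hgi.mono_set (Ioc_subset_Ioc le_rfl hmidL.le))
    have hq2 : (∫⁻ t in Ioo mid L, ENNReal.ofReal (qf hκ b t * r t))
        ≤ ∫⁻ t in Ioc mid L, (kin t + pp t) := by
      calc (∫⁻ t in Ioo mid L, ENNReal.ofReal (qf hκ b t * r t))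
          ≤ ∫⁻ t in Ioo mid L,
              ENNReal.ofReal (qf hκ b t) * ENNReal.ofReal (∫ s in t..L, g s) := by
            apply setLIntegral_mono' measurableSet_Ioo
            intro t ht
            rw [ENNReal.ofReal_mul (qf_nonneg hκ hb t)]
            exact mul_le_mul_right (ENNReal.ofReal_le_ofReal (h2 t ht)) _
        _ ≤ ∫⁻ t in Ioc mid L, (kin t + pp t) :=
            half2 hκ hb g hg0 hgm (hgi.mono_set (Ioc_subset_Ioc hmid0.le le_rfl))
    calc (∫⁻ t in Ioo 0 L, ENNReal.ofReal (qf hκ b t * r t))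
        = (∫⁻ t in Ioc 0 mid, ENNReal.ofReal (qf hκ b t * r t))
            + ∫⁻ t in Ioo mid L, ENNReal.ofReal (qf hκ b t * r t) := by
          rw [← lintegral_union measurableSet_Ioo hdisj, hsplitset]
      _ ≤ (∫⁻ t in Ioc 0 mid, (kin t + pp t)) + ∫⁻ t in Ioc mid L, (kin t + pp t) :=
          add_le_add hq1 hq2
      _ = ∫⁻ t in Ioc 0 L, (kin t + pp t) := by
          rw [← lintegral_union measurableSet_Ioc hdisj2, Ioc_union_Ioc_eq_Ioc hmid0.le hmidL.le]
      _ = ∫⁻ t in Ioo 0 L, (kin t + pp t) := by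
          rw [Measure.restrict_congr_set Ioo_ae_eq_Ioc]
      _ = (∫⁻ t in Ioo 0 L, kin t) + ∫⁻ t in Ioo 0 L, pp t :=
          lintegral_add_left hkinm _
  -- assemble
  have hT : (∫⁻ t in Ioo 0 L, (kin t + pot t))
      = (∫⁻ t in Ioo 0 L, kin t) + ∫⁻ t in Ioo 0 L, pot t := lintegral_add_left hkinm _
  have hchain : ENNReal.ofReal (4 * π * (b ^ 2 * κ))
      ≤ (∫⁻ t in Ioo 0 L, (kin t + pot t)) + ENNReal.ofReal (π * (b ^ 2 * κ)) := by
    calc ENNReal.ofReal (4 * π * (b ^ 2 * κ))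
        ≤ (∫⁻ t in Ioo 0 L, pot t) + ∫⁻ t in Ioo 0 L, ENNReal.ofReal (qf hκ b t * r t) := step1
      _ ≤ (∫⁻ t in Ioo 0 L, pot t)
            + ((∫⁻ t in Ioo 0 L, kin t) + ∫⁻ t in Ioo 0 L, pp t) := add_le_add le_rfl step2
      _ ≤ (∫⁻ t in Ioo 0 L, pot t)
            + ((∫⁻ t in Ioo 0 L, kin t) + ENNReal.ofReal (π * (b ^ 2 * κ))) :=
          by gcongr; exact lint_H_upper hκ hb
      _ = (∫⁻ t in Ioo 0 L, (kin t + pot t)) + ENNReal.ofReal (π * (b ^ 2 * κ)) := by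
          rw [hT]
          ring
  have hfinal : ENNReal.ofReal (3 * π * (b ^ 2 * κ))
      ≤ ∫⁻ t in Ioo 0 L, (kin t + pot t) := by
    have h3 : ENNReal.ofReal (3 * π * (b ^ 2 * κ))
        = ENNReal.ofReal (4 * π * (b ^ 2 * κ)) - ENNReal.ofReal (π * (b ^ 2 * κ)) := by
      rw [← ENNReal.ofReal_sub _ (by positivity)]
      congr 1
      ring
    rw [h3]
    exact tsub_le_iff_right.2 hchain
  exact hfinal
lemma lint_translate (f : ℝ → ℝ≥0∞) (c p q : ℝ) :
    ∫⁻ u in Ioo p q, f (u + c) = ∫⁻ t in Ioo (p + c) (q + c), f t := by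
  rw [← lintegral_indicator measurableSet_Ioo, ← lintegral_indicator measurableSet_Ioo]
  rw [← lintegral_add_right_eq_self (fun t => (Ioo (p + c) (q + c)).indicator f t) c]
  congr 1
  funext u
  rcases Classical.em (u ∈ Ioo p q) with h | h
  · rw [indicator_of_mem h, indicator_of_mem (by
      rcases h with ⟨h1, h2⟩
      exact ⟨by linarith, by linarith⟩)]
  · rw [indicator_of_notMem h, indicator_of_notMem (by
      intro hc
      rcases hc with ⟨h1, h2⟩
      exact h ⟨by linarith, by linarith⟩)]

/-- Gordon bound for a 1-periodic loop with `m` equally spaced zeros: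
`∫₀¹ (1/2)|x'|² + a/|x| ≥ (3/2) (2π)^{2/3} a^{2/3} m^{2/3}`. -/
theorem stmt13 (k m : ℕ) (hk : 1 ≤ k) (hm : 1 ≤ m) (a : ℝ) (ha : 0 < a)
    (x x' : ℝ → EuclideanSpace ℝ (Fin k))
    (hper : ∀ t : ℝ, x (t + 1) = x t)
    (hAC : ∀ t ∈ Set.Icc (0:ℝ) 1, x t = x 0 + ∫ s in (0:ℝ)..t, x' s)
    (hL1 : IntegrableOn x' (Set.Icc (0:ℝ) 1))
    (hL2 : IntegrableOn (fun t => ‖x' t‖ ^ 2) (Set.Icc (0:ℝ) 1))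
    (hzero : ∀ i : ℕ, i ≤ m - 1 → x ((i : ℝ) / m) = 0) :
    ENNReal.ofReal ((3 / 2) * (2 * π) ^ ((2:ℝ)/3) * a ^ ((2:ℝ)/3) * (m : ℝ) ^ ((2:ℝ)/3))
      ≤ ∫⁻ t in Set.Icc (0:ℝ) 1,
          ENNReal.ofReal ((1 / 2) * ‖x' t‖ ^ 2) + ENNReal.ofReal a / ENNReal.ofReal ‖x t‖ := by
  have hπ := Real.pi_pos
  have hm0 : (0:ℝ) < m := by exact_mod_cast hm
  -- measurable representative of ‖x'‖
  set g : ℝ → ℝ := fun s => ‖(hL1.aestronglyMeasurable.mk x') s‖ with hgdef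
  have hx''ae : x' =ᵐ[volume.restrict (Icc (0:ℝ) 1)] hL1.aestronglyMeasurable.mk x' :=
    hL1.aestronglyMeasurable.ae_eq_mk
  have hgm : Measurable g := hL1.aestronglyMeasurable.stronglyMeasurable_mk.measurable.norm
  have hg0 : ∀ s, 0 ≤ g s := fun s => norm_nonneg _
  have hgae : (fun s => ‖x' s‖) =ᵐ[volume.restrict (Icc (0:ℝ) 1)] g :=
    hx''ae.mono fun s hs => by rw [hgdef]; simp only [hs]
  have hgi : IntegrableOn g (Icc (0:ℝ) 1) := hL1.norm.congr hgae
  -- zeros including the right endpoint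
  have hz : ∀ i : ℕ, i ≤ m → x ((i:ℝ)/m) = 0 := by
    intro i hi
    rcases eq_or_lt_of_le hi with rfl | hlt
    · rw [div_self hm0.ne']
      have h0 : x 0 = 0 := by
        have := hzero 0 (Nat.zero_le _)
        simpa using this
      have h1 := hper 0
      rw [zero_add] at h1
      rw [h1, h0]
    · exact hzero i (by omega)
  -- continuity of x on [0,1]
  have hxc : ContinuousOn x (Icc (0:ℝ) 1) := by
    have hprim : ContinuousOn (fun t => ∫ s in Ioc (0:ℝ) t, x' s) (Icc (0:ℝ) 1) :=
      intervalIntegral.continuousOn_primitive hL1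
    have h2 : ContinuousOn (fun t => x 0 + ∫ s in (0:ℝ)..t, x' s) (Icc (0:ℝ) 1) := by
      apply ContinuousOn.add continuousOn_const
      apply hprim.congr
      intro t ht
      exact intervalIntegral.integral_of_le ht.1
    exact h2.congr fun t ht => hAC t ht
  -- constants
  set κ : ℝ := 1 / (2 * π * m) with hκdef
  have hκ : 0 < κ := by rw [hκdef]; positivity
  set b : ℝ := (a * (2 * π * m)) ^ ((1:ℝ)/3) with hbdef
  have hb : 0 < b := by
    rw [hbdef]
    exact Real.rpow_pos_of_pos (by positivity) _
  have hLm : 2 * π * κ = 1 / m := by rw [hκdef]; field_simp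
  have hb3 : b ^ 3 * κ = a := by
    have h1 : b ^ 3 = a * (2 * π * m) := by
      rw [hbdef, ← Real.rpow_natCast ((a * (2 * π * m)) ^ ((1:ℝ)/3)) 3,
        ← Real.rpow_mul (by positivity)]
      norm_num
    rw [h1, hκdef]
    field_simp
  have hb2 : b ^ 2 = a ^ ((2:ℝ)/3) * ((2 * π) ^ ((2:ℝ)/3) * (m:ℝ) ^ ((2:ℝ)/3)) := by
    rw [hbdef, ← Real.rpow_natCast ((a * (2 * π * m)) ^ ((1:ℝ)/3)) 2,
      ← Real.rpow_mul (by positivity)]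
    norm_num
    rw [show a * (2 * π * m) = a * ((2 * π) * m) by ring,
      Real.mul_rpow ha.le (by positivity), Real.mul_rpow (by positivity) (by positivity)]
  -- target constant identity
  have htarget : (3 / 2) * (2 * π) ^ ((2:ℝ)/3) * a ^ ((2:ℝ)/3) * (m : ℝ) ^ ((2:ℝ)/3)
      = m * (3 * π * (b ^ 2 * κ)) := by
    rw [hb2, hκdef]
    field_simp
  -- switch to the measurable representative in the goal
  have hswitch : ∫⁻ t in Icc (0:ℝ) 1,
        (ENNReal.ofReal ((1 / 2) * ‖x' t‖ ^ 2) + ENNReal.ofReal a / ENNReal.ofReal ‖x t‖)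
      = ∫⁻ t in Icc (0:ℝ) 1,
        (ENNReal.ofReal (g t ^ 2 / 2) + ENNReal.ofReal a / ENNReal.ofReal ‖x t‖) := by
    apply lintegral_congr_ae
    apply hgae.mono
    intro t ht
    have h1 : ‖x' t‖ = g t := ht
    dsimp only
    rw [show (1:ℝ)/2 * ‖x' t‖ ^ 2 = g t ^ 2 / 2 by rw [← h1]; ring]
  rw [hswitch]
  -- piecewise bound
  have hpiece : ∀ i : ℕ, i < m →
      ENNReal.ofReal (3 * π * (b ^ 2 * κ)) ≤
        ∫⁻ t in Ioo ((i:ℝ)/m) (((i:ℝ)+1)/m),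
          (ENNReal.ofReal (g t ^ 2 / 2) + ENNReal.ofReal a / ENNReal.ofReal ‖x t‖) := by
    intro i hi
    set c : ℝ := (i:ℝ)/m with hcdef
    have hc0 : 0 ≤ c := by positivity
    have hcL : c + 1/m ≤ 1 := by
      rw [hcdef]
      rw [← add_div, div_le_one hm0]
      have : (i:ℝ) + 1 ≤ m := by exact_mod_cast hi
      linarith
    have hxc0 : x c = 0 := hz i hi.le
    have hxcL : x (c + 1/m) = 0 := by
      have h1 : c + 1/m = ((i+1 : ℕ):ℝ)/m := by
        rw [hcdef]
        push_cast
        ring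
      rw [h1]
      exact hz (i+1) hi
    -- membership helper
    have hmemIcc : ∀ u : ℝ, u ∈ Icc (0:ℝ) (1/m) → u + c ∈ Icc (0:ℝ) 1 := by
      intro u hu
      constructor
      · linarith [hu.1]
      · linarith [hu.2]

    -- difference identity
    have hdiff : ∀ u ∈ Icc (0:ℝ) (1/m), x (u + c) = ∫ s in c..(u + c), x' s := by
      intro u hu
      have hmem := hmemIcc u hu
      have hcmem : c ∈ Icc (0:ℝ) 1 := ⟨hc0, by have := one_div_pos.2 hm0; linarith⟩
      have e1 := hAC (u + c) hmem
      have e2 := hAC c hcmem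
      have hint1 : IntervalIntegrable x' volume 0 (u + c) := by
        apply IntegrableOn.intervalIntegrable
        apply hL1.mono_set
        rw [uIcc_of_le (by linarith [hu.1] : (0:ℝ) ≤ u + c)]
        exact Icc_subset_Icc le_rfl hmem.2
      have hint2 : IntervalIntegrable x' volume 0 c := by
        apply IntegrableOn.intervalIntegrable
        apply hL1.mono_set
        rw [uIcc_of_le hc0]
        exact Icc_subset_Icc le_rfl hcmem.2
      have e3 := intervalIntegral.integral_interval_sub_left hint1 hint2
      have e4 : x (u + c) - x c = ∫ s in c..(u + c), x' s := by
        rw [e1, e2, ← e3]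
        abel
      rw [← e4, hxc0, sub_zero]
    -- norm bounds
    have hnormbound : ∀ u v : ℝ, u ∈ Icc (0:ℝ) (1/m) → v ∈ Icc (0:ℝ) (1/m) → u ≤ v →
        ‖x (v + c) - x (u + c)‖ ≤ ∫ s in (u + c)..(v + c), g s := by
      intro u v hu hv huv
      have hd1 := hdiff u hu
      have hd2 := hdiff v hv
      have hintuv : IntervalIntegrable x' volume (u + c) (v + c) := by
        apply IntegrableOn.intervalIntegrable
        apply hL1.mono_set
        rw [uIcc_of_le (by linarith)]
        exact Icc_subset_Icc (hmemIcc u hu).1 (hmemIcc v hv).2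
      have hintcu : IntervalIntegrable x' volume c (u + c) := by
        apply IntegrableOn.intervalIntegrable
        apply hL1.mono_set
        rw [uIcc_of_le (by linarith [hu.1])]
        exact Icc_subset_Icc hc0 (hmemIcc u hu).2
      have hsplit : x (v + c) - x (u + c) = ∫ s in (u + c)..(v + c), x' s := by
        rw [hd1, hd2]
        rw [← intervalIntegral.integral_interval_sub_left (hintcu.trans hintuv) hintcu]
      rw [hsplit]
      calc ‖∫ s in (u + c)..(v + c), x' s‖ ≤ ∫ s in (u + c)..(v + c), ‖x' s‖ :=
            intervalIntegral.norm_integral_le_integral_norm (by linarith)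
        _ = ∫ s in (u + c)..(v + c), g s := by
            rw [intervalIntegral.integral_of_le (by linarith : u + c ≤ v + c),
              intervalIntegral.integral_of_le (by linarith : u + c ≤ v + c)]
            apply setIntegral_congr_ae measurableSet_Ioc
            have hsubset : Ioc (u + c) (v + c) ⊆ Icc (0:ℝ) 1 := by
              intro s hs
              exact ⟨le_trans (hmemIcc u hu).1 hs.1.le, le_trans hs.2 (hmemIcc v hv).2⟩
            have h' := (ae_restrict_iff' measurableSet_Icc).1 hgae
            apply h'.mono
            intro s hs hmem
            exact hs (hsubset hmem)
    -- apply piece lemma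
    have hmain := piece hκ hb (fun u => g (u + c)) (fun u => ‖x (u + c)‖)
      (fun u => hg0 _) (hgm.comp (measurable_id.add_const c))
      ?hgi ?hr0 ?hrm ?h1 ?h2
    case hgi =>
      rw [hLm]
      have h1 : IntervalIntegrable g volume c (c + 1/m) := by
        apply IntegrableOn.intervalIntegrable
        apply hgi.mono_set
        rw [uIcc_of_le (by linarith [one_div_pos.2 hm0] : c ≤ c + 1/m)]
        exact Icc_subset_Icc hc0 hcL
      have h2 := h1.comp_add_right c
      simp only [sub_self, add_sub_cancel_left] at h2
      rw [intervalIntegrable_iff, uIoc_of_le (by positivity : (0:ℝ) ≤ 1/(m:ℝ))] at h2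
      exact h2
    case hr0 => exact fun t _ => norm_nonneg _
    case hrm =>
      apply AEMeasurable.norm
      apply ContinuousOn.aemeasurable _ measurableSet_Ioo
      apply (hxc.comp ((continuous_id.add continuous_const).continuousOn))
      intro u hu
      rw [hLm] at hu
      exact hmemIcc u (Ioo_subset_Icc_self hu)
    case h1 =>
      intro u hu
      have humem : u ∈ Icc (0:ℝ) (1/m) := by
        constructor
        · exact hu.1.le
        · have : π * κ ≤ 2 * π * κ := by nlinarith
          rw [hLm] at this
          linarith [hu.2]
      have h0mem : (0:ℝ) ∈ Icc (0:ℝ) (1/m) := ⟨le_rfl, by positivity⟩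
      have := hnormbound 0 u h0mem humem hu.1.le
      rw [zero_add, hxc0, sub_zero] at this
      calc ‖x (u + c)‖ ≤ ∫ s in c..(u + c), g s := this
        _ = ∫ s in (0:ℝ)..u, g (s + c) := by
            rw [intervalIntegral.integral_comp_add_right, zero_add]
    case h2 =>
      intro u hu
      rw [hLm] at hu
      have humem : u ∈ Icc (0:ℝ) (1/m) := ⟨by
          have : 0 < π * κ := by positivity
          linarith [hu.1], hu.2.le⟩
      have hLmem : (1/m : ℝ) ∈ Icc (0:ℝ) (1/m) := ⟨by positivity, le_rfl⟩
      have := hnormbound u (1/m) humem hLmem hu.2.le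
      rw [show (1/m : ℝ) + c = c + 1/m by ring, hxcL] at this
      rw [zero_sub, norm_neg] at this
      calc ‖x (u + c)‖ ≤ ∫ s in (u + c)..(c + 1/m), g s := this
        _ = ∫ s in u..(2 * π * κ), g (s + c) := by
            rw [hLm, intervalIntegral.integral_comp_add_right]
            congr 1
            ring
    -- transport via translation
    rw [hb3, hLm] at hmain
    have hend : (1:ℝ)/m + c = ((i:ℝ)+1)/m := by
      rw [hcdef]
      field_simp
      ring
    calc ENNReal.ofReal (3 * π * (b ^ 2 * κ))
        ≤ ∫⁻ u in Ioo (0:ℝ) (1/m), (ENNReal.ofReal (g (u + c) ^ 2 / 2)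
            + ENNReal.ofReal a / ENNReal.ofReal ‖x (u + c)‖) := hmain
      _ = ∫⁻ t in Ioo ((0:ℝ) + c) (1/m + c),
            (ENNReal.ofReal (g t ^ 2 / 2) + ENNReal.ofReal a / ENNReal.ofReal ‖x t‖) :=
          lint_translate (fun t => ENNReal.ofReal (g t ^ 2 / 2)
            + ENNReal.ofReal a / ENNReal.ofReal ‖x t‖) c 0 (1/m)
      _ = ∫⁻ t in Ioo ((i:ℝ)/m) (((i:ℝ)+1)/m),
            (ENNReal.ofReal (g t ^ 2 / 2) + ENNReal.ofReal a / ENNReal.ofReal ‖x t‖) := by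
          rw [zero_add, hend]
  -- sum over pieces
  have hkey : ∀ i j : ℕ, i < j → Disjoint (Ioo ((i:ℝ)/m) (((i:ℝ)+1)/m))
      (Ioo ((j:ℝ)/m) (((j:ℝ)+1)/m)) := by
    intro i j hij
    apply Set.disjoint_left.2
    intro t h1t h2t
    have hij' : ((i:ℝ)+1) ≤ (j:ℝ) := by exact_mod_cast hij
    have h1 : ((i:ℝ)+1)/m ≤ (j:ℝ)/m := (div_le_div_iff_of_pos_right hm0).2 hij'
    linarith [h1t.2, h2t.1]
  have hdisjoint : (↑(Finset.range m) : Set ℕ).PairwiseDisjoint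
      (fun i : ℕ => Ioo ((i:ℝ)/m) (((i:ℝ)+1)/m)) := by
    intro i _ j _ hij
    rcases lt_or_gt_of_ne hij with h | h
    · exact hkey i j h
    · exact (hkey j i h).symm
  have hunion : (⋃ i ∈ Finset.range m, Ioo ((i:ℝ)/m) (((i:ℝ)+1)/m)) ⊆ Icc (0:ℝ) 1 := by
    intro t ht
    simp only [Finset.mem_range, mem_iUnion, exists_prop] at ht
    obtain ⟨i, hi, hti⟩ := ht
    constructor
    · have h0 : (0:ℝ) ≤ (i:ℝ)/m := by positivity
      linarith [hti.1]
    · have h1 : ((i:ℝ)+1)/m ≤ 1 := by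
        rw [div_le_one hm0]
        exact_mod_cast hi
      linarith [hti.2]
  have hsum := lintegral_biUnion_finset (μ := volume) (s := Finset.range m)
    (t := fun i : ℕ => Ioo ((i:ℝ)/m) (((i:ℝ)+1)/m)) hdisjoint
    (fun i _ => measurableSet_Ioo)
    (f := fun t => ENNReal.ofReal (g t ^ 2 / 2) + ENNReal.ofReal a / ENNReal.ofReal ‖x t‖)
  calc ENNReal.ofReal ((3 / 2) * (2 * π) ^ ((2:ℝ)/3) * a ^ ((2:ℝ)/3) * (m : ℝ) ^ ((2:ℝ)/3))
      = ∑ i ∈ Finset.range m, ENNReal.ofReal (3 * π * (b ^ 2 * κ)) := by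
        rw [Finset.sum_const, Finset.card_range, nsmul_eq_mul, htarget,
          ← ENNReal.ofReal_natCast m, ← ENNReal.ofReal_mul (by positivity)]
    _ ≤ ∑ i ∈ Finset.range m, ∫⁻ t in Ioo ((i:ℝ)/m) (((i:ℝ)+1)/m),
          (ENNReal.ofReal (g t ^ 2 / 2) + ENNReal.ofReal a / ENNReal.ofReal ‖x t‖) :=
        Finset.sum_le_sum fun i hi => hpiece i (Finset.mem_range.1 hi)
    _ = ∫⁻ t in ⋃ i ∈ Finset.range m, Ioo ((i:ℝ)/m) (((i:ℝ)+1)/m),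
          (ENNReal.ofReal (g t ^ 2 / 2) + ENNReal.ofReal a / ENNReal.ofReal ‖x t‖) := hsum.symm
    _ ≤ ∫⁻ t in Icc (0:ℝ) 1,
          (ENNReal.ofReal (g t ^ 2 / 2) + ENNReal.ofReal a / ENNReal.ofReal ‖x t‖) :=
        lintegral_mono_set hunion

end
end
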